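/- arXiv:1601.08115 — 13 statements merged into one kernel-verified Lean document; each statement's English description precedes it below -/
import Mathlib

section
/- Let f be a nonzero linear functional on ⋀^k V with associated alternating k-linear form α. The hyperplane H_f of the k-Grassmannian (the set of k-dimensional subspaces X of V on which α vanishes identically) meets every line ℓ_{Y,Z} = {X : Y ⊂ X ⊂ Z, dim X = k} (where dim Y = k−1, dim Z = k+1) in either a single point or the whole line, and H_f is a proper subset of the set of all k-subspaces. -/
open Module

/-- The wedge `v₁ ∧ ⋯ ∧ vₖ`, as an element of the `k`-th exterior power `⋀[K]^k V`. -/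
noncomputable def wedge (K : Type*) {V : Type*} [Field K] [AddCommGroup V] [Module K V]
    (k : ℕ) (v : Fin k → V) : ⋀[K]^k V :=
  ⟨ExteriorAlgebra.ιMulti K k v, ExteriorAlgebra.ιMulti_range K k (Set.mem_range_self v)⟩

section Aux

variable {K V : Type*} [Field K] [AddCommGroup V] [Module K V]

/-- If an alternating `k`-form vanishes on one linearly independent `k`-tuple from a
`k`-dimensional subspace `X`, then it vanishes on all tuples from `X`. -/
lemma vanish_on_sub {k : ℕ} (α : AlternatingMap K V K (Fin k)) (hk : k ≠ 0)
    (X : Submodule K V) (hX : finrank K X = k) (v : Fin k → V) (hv : ∀ i, v i ∈ X)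
    (hind : LinearIndependent K v) (h0 : α v = 0) :
    ∀ w : Fin k → V, (∀ i, w i ∈ X) → α w = 0 := by
  have : Nonempty (Fin k) := ⟨⟨0, Nat.pos_of_ne_zero hk⟩⟩
  set v' : Fin k → X := fun i => ⟨v i, hv i⟩ with hv'
  have hind' : LinearIndependent K v' :=
    LinearIndependent.of_comp X.subtype (by exact hind)
  let e : Basis (Fin k) K X := basisOfLinearIndependentOfCardEqFinrank hind' (by simp [hX])
  have he : ⇑e = v' := coe_basisOfLinearIndependentOfCardEqFinrank _ _
  set α' : AlternatingMap K X K (Fin k) := α.compLinearMap X.subtype with hα'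
  have h1 : α' = α' e • e.det := α'.eq_smul_basis_det e
  have h2 : α' ⇑e = 0 := by
    rw [he]
    show α (X.subtype ∘ v') = 0
    have : X.subtype ∘ v' = v := rfl
    rw [this, h0]
  intro w hw
  have h3 : α w = α' (fun i => ⟨w i, hw i⟩) := rfl
  rw [h3, h1]
  simp [h2]

end Aux

/-- For a nonzero linear functional `f` on `⋀^k V` with associated alternating form `α`,
the set `H_f` of `k`-subspaces on which `α` vanishes meets every line `ℓ_{Y,Z}` of the
`k`-Grassmannian in a single point or the whole line, and is a proper subset of the set of
`k`-subspaces. -/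
theorem stmt_1 (K V : Type*) [Field K] [AddCommGroup V] [Module K V] [FiniteDimensional K V]
    (n k : ℕ) (hn : finrank K V = n) (hk : 2 ≤ k) (hkn : k < n)
    (f : Module.Dual K (⋀[K]^k V)) (hf : f ≠ 0)
    (α : AlternatingMap K V K (Fin k))
    (hα : ∀ v : Fin k → V, α v = f (wedge K k v))
    (H : Set (Submodule K V))
    (hH : H = {X : Submodule K V | finrank K X = k ∧ ∀ v : Fin k → V, (∀ i, v i ∈ X) → α v = 0}) :
    (∀ Y Z : Submodule K V, finrank K Y = k - 1 → finrank K Z = k + 1 → Y ≤ Z →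
      ((∃ X₀ : Submodule K V,
          {X : Submodule K V | Y ≤ X ∧ X ≤ Z ∧ finrank K X = k} ∩ H = {X₀}) ∨
        {X : Submodule K V | Y ≤ X ∧ X ≤ Z ∧ finrank K X = k} ⊆ H)) ∧
    (∃ X : Submodule K V, finrank K X = k ∧ X ∉ H) := by
  constructor
  · intro Y Z hY hZ hYZ
    obtain ⟨m, rfl⟩ : ∃ m, k = m + 1 := ⟨k - 1, by omega⟩
    have hYm : finrank K Y = m := by omega
    obtain ⟨y⟩ : Nonempty (Basis (Fin m) K Y) := ⟨finBasisOfFinrankEq K Y hYm⟩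
    set yv : Fin m → V := fun i => (y i : V) with hyvdef
    have hyvY : ∀ i, yv i ∈ Y := fun i => (y i).2
    have hyind : LinearIndependent K yv :=
      y.linearIndependent.map' Y.subtype (Submodule.ker_subtype Y)
    -- the linear functional `u ↦ α (y₁, …, yₘ, u)`
    set φ : V →ₗ[K] K := α.toMultilinearMap.toLinearMap (Fin.snoc yv 0) (Fin.last m) with hφdef
    have hφ_apply : ∀ u : V, φ u = α (Fin.snoc yv u) := by
      intro u
      show α.toMultilinearMap (Function.update (Fin.snoc yv 0) (Fin.last m) u) = _
      rw [Fin.update_snoc_last]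
      rfl
    have hφY : ∀ u ∈ Y, φ u = 0 := by
      intro u hu
      rw [hφ_apply]
      apply α.map_linearDependent
      intro hli
      have h1 : finrank K (Submodule.span K (Set.range (Fin.snoc yv u))) = m + 1 := by
        rw [finrank_span_eq_card hli, Fintype.card_fin]
      have h2 : Submodule.span K (Set.range (Fin.snoc yv u)) ≤ Y := by
        rw [Submodule.span_le]
        rintro _ ⟨i, rfl⟩
        refine Fin.lastCases ?_ ?_ i
        · simpa using hu
        · intro j; simpa using hyvY j
      have h3 := Submodule.finrank_mono h2
      omega
    have hsnoc_mem : ∀ (X : Submodule K V), Y ≤ X → ∀ u ∈ X, ∀ i : Fin (m+1), (Fin.snoc yv u : Fin (m+1) → V) i ∈ X := by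
      intro X hYX u hu i
      refine Fin.lastCases ?_ ?_ i
      · simpa using hu
      · intro j; simpa using hYX (hyvY j)
    have memH : ∀ X : Submodule K V, Y ≤ X → finrank K X = m + 1 →
        (∀ u ∈ X, φ u = 0) → X ∈ H := by
      intro X hYX hXr hvan
      rw [hH]
      refine ⟨hXr, ?_⟩
      have hYne : Y ≠ X := by intro h; rw [← h] at hXr; omega
      obtain ⟨u, huX, huY⟩ := SetLike.exists_of_lt (lt_of_le_of_ne hYX hYne)
      have hsp : Submodule.span K (Set.range yv) ≤ Y := by
        rw [Submodule.span_le]; rintro _ ⟨i, rfl⟩; exact hyvY i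
      have hind2 : LinearIndependent K (Fin.snoc yv u) :=
        linearIndependent_fin_snoc.mpr ⟨hyind, fun h => huY (hsp h)⟩
      exact vanish_on_sub α (by omega) X hXr _ (hsnoc_mem X hYX u huX) hind2
        (by rw [← hφ_apply]; exact hvan u huX)
    have memH' : ∀ X : Submodule K V, Y ≤ X → X ∈ H → ∀ u ∈ X, φ u = 0 := by
      intro X hYX hXH u hu
      rw [hH] at hXH
      rw [hφ_apply]
      exact hXH.2 _ (hsnoc_mem X hYX u hu)
    by_cases hcase : ∀ u ∈ Z, φ u = 0
    · right
      rintro X ⟨hYX, hXZ, hXr⟩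
      exact memH X hYX hXr fun u hu => hcase u (hXZ hu)
    · left
      push_neg at hcase
      obtain ⟨w, hwZ, hw0⟩ := hcase
      set X₀ : Submodule K V := Z ⊓ LinearMap.ker φ with hX₀def
      have hYX₀ : Y ≤ X₀ := le_inf hYZ fun u hu => LinearMap.mem_ker.mpr (hφY u hu)
      have hX₀Z : X₀ ≤ Z := inf_le_left
      have hX₀lt : X₀ < Z := by
        refine lt_of_le_of_ne hX₀Z fun h => hw0 ?_
        rw [← h] at hwZ
        exact LinearMap.mem_ker.mp hwZ.2
      have hker : finrank K (LinearMap.ker φ) = n - 1 := by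
        have h1 := LinearMap.finrank_range_add_finrank_ker φ
        have h2 : LinearMap.range φ = ⊤ :=
          LinearMap.range_eq_top.mpr fun a => ⟨(a * (φ w)⁻¹) • w, by
            simp [smul_eq_mul, mul_assoc, inv_mul_cancel₀ hw0]⟩
        rw [h2, finrank_top, finrank_self, hn] at h1
        omega
      have hsup : finrank K (Z ⊔ LinearMap.ker φ : Submodule K V) ≤ n :=
        hn ▸ Submodule.finrank_le _
      have hinf := Submodule.finrank_sup_add_finrank_inf_eq Z (LinearMap.ker φ)
      have hX₀lt' : finrank K X₀ < m + 1 + 1 := hZ ▸ Submodule.finrank_lt_finrank_of_lt hX₀lt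
      have hX₀r : finrank K X₀ = m + 1 := by
        rw [hZ, hker] at hinf
        have hX₀eq : finrank K ↥X₀ = finrank K ↥(Z ⊓ LinearMap.ker φ) := rfl
        omega
      refine ⟨X₀, ?_⟩
      ext X
      simp only [Set.mem_inter_iff, Set.mem_setOf_eq, Set.mem_singleton_iff]
      constructor
      · rintro ⟨⟨hYX, hXZ, hXr⟩, hXH⟩
        have hXle : X ≤ X₀ :=
          le_inf hXZ fun u hu => LinearMap.mem_ker.mpr (memH' X hYX hXH u hu)
        exact Submodule.eq_of_le_of_finrank_eq hXle (by omega)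
      · rintro rfl
        exact ⟨⟨hYX₀, hX₀Z, hX₀r⟩,
          memH X₀ hYX₀ hX₀r fun u hu => LinearMap.mem_ker.mp hu.2⟩
  · by_contra hcon
    push_neg at hcon
    apply hf
    have hvan : ∀ v : Fin k → V, f (wedge K k v) = 0 := by
      intro v
      rw [← hα]
      by_cases hli : LinearIndependent K v
      · have hXr : finrank K (Submodule.span K (Set.range v)) = k := by
          rw [finrank_span_eq_card hli, Fintype.card_fin]
        have hmem := hcon _ hXr
        rw [hH] at hmem
        exact hmem.2 v fun i => Submodule.subset_span ⟨i, rfl⟩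
      · exact α.map_linearDependent v hli
    have hle' : Submodule.span K (Set.range (ExteriorAlgebra.ιMulti K k (M := V))) ≤
        (LinearMap.ker f).map (⋀[K]^k V).subtype := by
      refine Submodule.span_le.mpr ?_
      rintro _ ⟨v, rfl⟩
      exact ⟨wedge K k v, LinearMap.mem_ker.mpr (hvan v), rfl⟩
    rw [ExteriorAlgebra.ιMulti_span_fixedDegree] at hle'
    have hle := hle'
    apply LinearMap.ext
    rintro ⟨x, hx⟩
    obtain ⟨y, hy, hyx⟩ := hle hx
    have hxy : y = ⟨x, hx⟩ := Subtype.ext hyx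
    rw [← hxy]
    simpa using LinearMap.mem_ker.mp hy
end

section
/- Let H be a hyperplane of the k-Grassmannian of V and let 1 ≤ i < k. Then the i-radical R_i(H), consisting of all i-dimensional subspaces X of V such that every k-dimensional subspace containing X belongs to H, is a subspace of the i-Grassmannian: if two distinct members X₁, X₂ of R_i(H) lie on a common line ℓ_{Y,Z} of the i-Grassmannian, then every member of ℓ_{Y,Z} belongs to R_i(H). -/
open Module

/-- The `i`-radical `R_i(H)` of a hyperplane `H` of the `k`-Grassmannian is a subspace of the
`i`-Grassmannian: if two distinct members of `R_i(H)` lie on a common line `ℓ_{Y,Z}`, then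
every member of `ℓ_{Y,Z}` belongs to `R_i(H)`. -/
theorem stmt_3 (K V : Type*) [Field K] [AddCommGroup V] [Module K V] [FiniteDimensional K V]
    (n k i : ℕ) (hn : finrank K V = n) (hk : 2 ≤ k) (hkn : k < n)
    (hi1 : 1 ≤ i) (hik : i < k)
    (α : AlternatingMap K V K (Fin k)) (hα : α ≠ 0)
    (H : Set (Submodule K V))
    (hH : H = {X : Submodule K V | finrank K X = k ∧ ∀ v : Fin k → V, (∀ j, v j ∈ X) → α v = 0})
    (Ri : Set (Submodule K V))
    (hRi : Ri = {X : Submodule K V | finrank K X = i ∧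
      ∀ U : Submodule K V, finrank K U = k → X ≤ U → U ∈ H})
    (Y Z : Submodule K V) (hY : finrank K Y = i - 1) (hZ : finrank K Z = i + 1) (hYZ : Y ≤ Z)
    (X₁ X₂ : Submodule K V)
    (hX₁ : Y ≤ X₁ ∧ X₁ ≤ Z ∧ finrank K X₁ = i)
    (hX₂ : Y ≤ X₂ ∧ X₂ ≤ Z ∧ finrank K X₂ = i)
    (hne : X₁ ≠ X₂) (h₁ : X₁ ∈ Ri) (h₂ : X₂ ∈ Ri) :
    ∀ X : Submodule K V, Y ≤ X → X ≤ Z → finrank K X = i → X ∈ Ri := by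
  subst hH hRi
  obtain ⟨hY1, hZ1, hX1i⟩ := hX₁
  obtain ⟨hY2, hZ2, hX2i⟩ := hX₂
  obtain ⟨-, h₁U⟩ := h₁
  obtain ⟨-, h₂U⟩ := h₂
  obtain ⟨j, rfl⟩ : ∃ j, i = j + 1 := ⟨i - 1, by omega⟩
  obtain ⟨m, rfl⟩ : ∃ m, k = m + 2 := ⟨k - 2, by omega⟩
  -- X₁ ⊔ X₂ = Z
  have hsup12 : X₁ ⊔ X₂ = Z := by
    have hlt : X₁ < X₁ ⊔ X₂ := by
      rcases lt_or_eq_of_le (le_sup_left : X₁ ≤ X₁ ⊔ X₂) with h | h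
      · exact h
      · exfalso
        apply hne
        have h2 : X₂ ≤ X₁ := le_sup_right.trans h.ge
        exact (Submodule.eq_of_le_of_finrank_le h2 (by omega)).symm
    have h1 := Submodule.finrank_lt_finrank_of_lt hlt
    exact Submodule.eq_of_le_of_finrank_le (sup_le hZ1 hZ2) (by omega)
  intro X hYX hXZ hXi
  refine ⟨hXi, ?_⟩
  intro U hU hXU
  by_cases hZU : Z ≤ U
  · exact h₁U U hU (hZ1.trans hZU)
  -- U ⊓ Z = X
  have hXUZ : X = U ⊓ Z := by
    have hle : X ≤ U ⊓ Z := le_inf hXU hXZ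
    refine Submodule.eq_of_le_of_finrank_le hle ?_
    by_contra hlt
    push_neg at hlt
    have h2 : U ⊓ Z = Z := Submodule.eq_of_le_of_finrank_le inf_le_right
      (by have := Submodule.finrank_mono hle; omega)
    exact hZU (h2 ▸ inf_le_left)
  -- complement C of X inside U
  obtain ⟨C', hC'⟩ := Submodule.exists_isCompl (X.comap U.subtype)
  set C : Submodule K V := C'.map U.subtype with hCdef
  have hCU : C ≤ U := Submodule.map_subtype_le U C'
  have hXC_sup : X ⊔ C = U := by
    have h0 := congrArg (Submodule.map U.subtype) hC'.sup_eq_top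
    rwa [Submodule.map_sup, Submodule.map_comap_subtype, inf_eq_right.mpr hXU,
      Submodule.map_top, Submodule.range_subtype] at h0
  have hXC_inf : X ⊓ C = ⊥ := by
    have h0 := congrArg (Submodule.map U.subtype) hC'.inf_eq_bot
    rwa [Submodule.map_inf _ U.injective_subtype, Submodule.map_comap_subtype,
      inf_eq_right.mpr hXU, Submodule.map_bot] at h0
  have hZC : Z ⊓ C = ⊥ := by
    have h' : Z ⊓ C ≤ X ⊓ C := by
      refine le_inf ?_ inf_le_right
      rw [hXUZ]
      exact le_inf (inf_le_right.trans hCU) inf_le_left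
    exact le_bot_iff.mp (hXC_inf ▸ h')
  -- dimension of C
  set c := finrank K C with hc
  have hcval : (j + 1) + c = m + 2 := by
    have h0 := Submodule.finrank_sup_add_finrank_inf_eq X C
    rw [hXC_sup, hXC_inf, finrank_bot] at h0
    omega
  have hfr : ∀ P : Submodule K V, P ≤ Z → finrank K ↥(P ⊔ C) = finrank K P + c := by
    intro P hP
    have h0 : P ⊓ C = ⊥ := by
      rw [← le_bot_iff, ← hZC]
      exact inf_le_inf_right C hP
    have h1 := Submodule.finrank_sup_add_finrank_inf_eq P C
    rw [h0, finrank_bot] at h1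
    omega
  set D := Y ⊔ C with hD
  have hDfr : finrank K D = m + 1 := by rw [hD, hfr Y hYZ]; omega
  -- the k-dimensional spaces X₁ ⊔ C and X₂ ⊔ C are in H
  have hU₁mem := h₁U (X₁ ⊔ C) (by rw [hfr X₁ hZ1]; omega) le_sup_left
  have hU₂mem := h₂U (X₂ ⊔ C) (by rw [hfr X₂ hZ2]; omega) le_sup_left
  -- basis of D
  set d0 : Basis (Fin (m + 1)) K D := (Module.finBasis K D).reindex (finCongr hDfr) with hd0
  set d : Fin (m + 1) → V := fun a => (d0 a : V) with hd
  have hdD : ∀ a, d a ∈ D := fun a => (d0 a).2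
  have hspan_d : Submodule.span K (Set.range d) = D := by
    have h1 : Submodule.span K (Set.range ⇑d0) = ⊤ := d0.span_eq
    have h2 := congrArg (Submodule.map D.subtype) h1
    rwa [Submodule.map_span, ← Set.range_comp, Submodule.map_top, Submodule.range_subtype] at h2
  -- the linear form β w = α (w, d₁, ..., d_{m+1})
  set β : V →ₗ[K] K := α.toMultilinearMap.toLinearMap (Fin.cons 0 d) 0 with hβ
  have hβapp : ∀ w : V, β w = α (Fin.cons w d) := by
    intro w
    show α.toMultilinearMap (Function.update (Fin.cons 0 d) 0 w) = _
    rw [Fin.update_cons_zero]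
    rfl
  have hkerβ : ∀ T : Submodule K V, D ≤ T →
      (∀ v : Fin (m + 2) → V, (∀ a, v a ∈ T) → α v = 0) → T ≤ LinearMap.ker β := by
    intro T hDT hT w hw
    rw [LinearMap.mem_ker, hβapp]
    apply hT
    intro a
    refine Fin.cases ?_ ?_ a
    · exact hw
    · intro a'
      exact hDT (hdD a')
  have hWker : Z ⊔ C ≤ LinearMap.ker β := by
    have e : Z ⊔ C = (X₁ ⊔ C) ⊔ (X₂ ⊔ C) := by
      rw [← hsup12, sup_sup_sup_comm, sup_idem]
    rw [e, sup_le_iff]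
    exact ⟨hkerβ _ (sup_le_sup_right hY1 C) hU₁mem.2,
      hkerβ _ (sup_le_sup_right hY2 C) hU₂mem.2⟩
  -- D < U, pick u ∈ U \ D
  have hDU : D ≤ U := by
    rw [hD, ← hXC_sup]
    exact sup_le_sup_right hYX C
  have hDltU : D < U := lt_of_le_of_ne hDU (by intro h; rw [h] at hDfr; omega)
  obtain ⟨u, huU, huD⟩ := SetLike.exists_of_lt hDltU
  have hspanU : D ⊔ Submodule.span K {u} = U := by
    have hlt : D < D ⊔ Submodule.span K {u} := by
      refine lt_of_le_of_ne le_sup_left ?_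
      intro h
      apply huD
      rw [h]
      exact Submodule.mem_sup_right (Submodule.mem_span_singleton_self u)
    have h1 := Submodule.finrank_lt_finrank_of_lt hlt
    have h2 := Submodule.finrank_mono
      (sup_le hDU (Submodule.span_le.mpr (Set.singleton_subset_iff.mpr huU)))
    exact Submodule.eq_of_le_of_finrank_le
      (sup_le hDU (Submodule.span_le.mpr (Set.singleton_subset_iff.mpr huU))) (by omega)
  -- basis of U
  have hdU : ∀ a, d a ∈ U := fun a => hDU (hdD a)
  set t : Fin (m + 2) → U := Fin.cons ⟨u, huU⟩ (fun a => ⟨d a, hdU a⟩) with ht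
  have htcoe : (fun a => ((t a : V))) = Fin.cons u d := by
    funext a
    refine Fin.cases rfl (fun a' => rfl) a
  have hspan_t : ⊤ ≤ Submodule.span K (Set.range t) := by
    have hmap : Submodule.map U.subtype (Submodule.span K (Set.range t)) = U := by
      rw [Submodule.map_span, ← Set.range_comp]
      have h0 : (⇑U.subtype ∘ t) = Fin.cons u d := htcoe
      rw [h0, Fin.range_cons, Submodule.span_insert, hspan_d, sup_comm, hspanU]
    have h1 : Submodule.span K (Set.range t) = ⊤ := by
      apply Submodule.map_injective_of_injective U.injective_subtype
      rw [hmap, Submodule.map_top, Submodule.range_subtype]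
    exact h1.ge
  have hcard : Fintype.card (Fin (m + 2)) = finrank K U := by simp [hU]
  set b := basisOfTopLeSpanOfCardEqFinrank t hspan_t hcard with hb
  -- α vanishes on U
  set αU := α.compLinearMap U.subtype with hαU
  have hαU0 : αU = 0 := by
    apply b.ext_alternating
    intro v hv
    have hbij : Function.Bijective v := Finite.injective_iff_bijective.mp hv
    set σ := Equiv.ofBijective v hbij with hσ
    have hcomp : (fun a => b (v a)) = ⇑b ∘ ⇑σ := rfl
    rw [hcomp, AlternatingMap.map_perm]
    have hb0 : αU ⇑b = 0 := by
      have hbe : ⇑b = t := coe_basisOfTopLeSpanOfCardEqFinrank t hspan_t hcard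
      rw [hbe]
      have h0 : αU t = α (Fin.cons u d) := by
        show α (fun a => ((t a : V))) = _
        rw [htcoe]
      rw [h0, ← hβapp]
      have huW : u ∈ Z ⊔ C := (sup_le_sup_right hXZ C) (hXC_sup ▸ huU)
      exact LinearMap.mem_ker.mp (hWker huW)
    simp [hb0]
  refine ⟨hU, ?_⟩
  intro v hv
  have h0 : αU (fun a => ⟨v a, hv a⟩) = α v := rfl
  rw [hαU0] at h0
  simpa using h0.symm
end

section
/- Let α be a nontrivial alternating k-linear form on V defining a hyperplane H of the k-Grassmannian. Then the radical Rad(α) = {v ∈ V : α(x₁,…,x_{k−1},v) = 0 for all x₁,…,x_{k−1} ∈ V} has codimension at least k in V. -/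
open Module

/-- The radical of a nontrivial alternating `k`-linear form (`k = m + 1`, `2 ≤ k < n`) has
codimension at least `k` in `V`. -/
theorem stmt_4 (K V : Type*) [Field K] [AddCommGroup V] [Module K V] [FiniteDimensional K V]
    (n m : ℕ) (hn : finrank K V = n) (hk : 2 ≤ m + 1) (hkn : m + 1 < n)
    (α : AlternatingMap K V K (Fin (m + 1))) (hα : α ≠ 0)
    (Rad : Submodule K V)
    (hRad : ∀ x : V, x ∈ Rad ↔ ∀ v : Fin m → V, α (Fin.snoc v x) = 0) :
    finrank K Rad + (m + 1) ≤ n := by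
  classical
  obtain ⟨x, hx⟩ : ∃ x : Fin (m + 1) → V, α x ≠ 0 := by
    by_contra h
    push_neg at h
    exact hα (AlternatingMap.ext fun v => by simp [h v])
  have hli : LinearIndependent K x := by
    by_contra h
    exact hx (α.map_linearDependent x h)
  set W := Submodule.span K (Set.range x) with hW
  -- key: for each `i`, the auxiliary permutation sending `last` to `i`
  have hsnoc_ne : ∀ i : Fin (m + 1), α (Fin.snoc (x ∘ i.succAbove) (x i)) ≠ 0 := by
    intro i
    have hg : Function.Bijective (Fin.snoc (i.succAbove : Fin m → Fin (m + 1)) i) := by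
      rw [Fintype.bijective_iff_injective_and_card]
      refine ⟨?_, rfl⟩
      intro a b hab
      rcases Fin.eq_castSucc_or_eq_last a with ⟨a', rfl⟩ | rfl <;>
        rcases Fin.eq_castSucc_or_eq_last b with ⟨b', rfl⟩ | rfl
      · simp only [Fin.snoc_castSucc] at hab
        exact congrArg Fin.castSucc (i.succAbove_right_injective hab)
      · simp only [Fin.snoc_castSucc, Fin.snoc_last] at hab
        exact absurd hab (i.succAbove_ne a')
      · simp only [Fin.snoc_castSucc, Fin.snoc_last] at hab
        exact absurd hab.symm (i.succAbove_ne b')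
      · rfl
    set σ : Equiv.Perm (Fin (m + 1)) := Equiv.ofBijective _ hg with hσ
    have hcomp : Fin.snoc (x ∘ i.succAbove) (x i) = x ∘ σ := by
      funext j
      rcases Fin.eq_castSucc_or_eq_last j with ⟨j', rfl⟩ | rfl
      · simp [hσ, Equiv.ofBijective_apply]
      · simp [hσ, Equiv.ofBijective_apply]
    rw [hcomp, α.map_perm x σ]
    rcases Int.units_eq_one_or (Equiv.Perm.sign σ) with hs | hs <;>
      simp [hs, hx]
  have hdisj : Rad ⊓ W = ⊥ := by
    rw [Submodule.eq_bot_iff]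
    rintro v ⟨hvR, hvW⟩
    obtain ⟨c, hc⟩ := (Submodule.mem_span_range_iff_exists_fun K).1 hvW
    have hci : ∀ i : Fin (m + 1), c i = 0 := by
      intro i
      have h0 : α (Fin.snoc (x ∘ i.succAbove) v) = 0 := (hRad v).1 hvR _
      have hexp : α (Fin.snoc (x ∘ i.succAbove) v)
          = ∑ j : Fin (m + 1), c j • α (Fin.snoc (x ∘ i.succAbove) (x j)) := by
        rw [← hc, ← Fin.update_snoc_last (x := v)]
        rw [α.map_update_sum Finset.univ (Fin.last m) (fun j => c j • x j)]
        refine Finset.sum_congr rfl fun j _ => ?_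
        rw [α.map_update_smul, Fin.update_snoc_last]
      have hvanish : ∀ j : Fin (m + 1), j ≠ i → α (Fin.snoc (x ∘ i.succAbove) (x j)) = 0 := by
        intro j hj
        obtain ⟨j', hj'⟩ := Fin.exists_succAbove_eq hj
        refine α.map_eq_zero_of_eq _ (i := Fin.castSucc j') (j := Fin.last m) ?_ ?_
        · simp [hj']
        · exact Fin.ne_of_lt (Fin.castSucc_lt_last j')
      rw [hexp, Finset.sum_eq_single i (fun j _ hj => by rw [hvanish j hj, smul_zero])
        (fun h => absurd (Finset.mem_univ i) h)] at h0
      exact (smul_eq_zero.1 h0).resolve_right (hsnoc_ne i)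
    have : v = 0 := by rw [← hc]; simp [hci]
    exact this
  have hWfin : finrank K W = m + 1 := by
    rw [hW, finrank_span_eq_card hli, Fintype.card_fin]
  have := Submodule.finrank_sup_add_finrank_inf_eq Rad W
  rw [hdisj, finrank_bot, add_zero, hWfin] at this
  calc finrank K Rad + (m + 1) = finrank K ↥(Rad ⊔ W) := this.symm
    _ ≤ finrank K V := Submodule.finrank_le _
    _ = n := hn
end

section
/- With H = H₀ ⊙ V₁ the trivial extension of a hyperplane H₀ of the k-Grassmannian of V₀ by V₁ (where V = V₀ ⊕ V₁), the upper radical satisfies: a (k−1)-dimensional subspace X of V belongs to R^↑(H) if and only if either X ∩ V₁ ≠ 0 or π(X) ∈ R^↑(H₀), where π is the projection onto V₀ along V₁. -/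
open Module

section Aux

variable {K V W : Type*} [Field K] [AddCommGroup V] [Module K V] [FiniteDimensional K V]
  [AddCommGroup W] [Module K W]

/-- Rank–nullity for the restriction of a linear map to a submodule. -/
lemma aux_finrank_map_add (f : V →ₗ[K] W) (U : Submodule K V) :
    finrank K (U.map f) + finrank K ↥(U ⊓ LinearMap.ker f) = finrank K U := by
  have h := LinearMap.finrank_range_add_finrank_ker (f ∘ₗ U.subtype)
  have hr : LinearMap.range (f ∘ₗ U.subtype) = U.map f := by
    rw [LinearMap.range_comp, Submodule.range_subtype]
  have hk : finrank K ↥(LinearMap.ker (f ∘ₗ U.subtype)) = finrank K ↥(U ⊓ LinearMap.ker f) := by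
    rw [LinearMap.ker_comp, ← Submodule.finrank_map_subtype_eq U,
      Submodule.map_comap_subtype, inf_comm]
  rw [hr, hk] at h
  exact h

/-- `k` vectors inside a subspace of dimension `< k` are killed by any alternating `k`-form. -/
lemma aux_alt_small {k : ℕ} (φ₀ : AlternatingMap K V K (Fin k)) (W' : Submodule K V)
    (hW : finrank K W' < k) (w : Fin k → V) (hw : ∀ i, w i ∈ W') : φ₀ w = 0 := by
  apply φ₀.map_linearDependent
  intro hind
  have h1 : finrank K (Submodule.span K (Set.range w)) = k := by
    rw [finrank_span_eq_card hind, Fintype.card_fin]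
  have h2 : Submodule.span K (Set.range w) ≤ W' :=
    Submodule.span_le.mpr (by rintro _ ⟨i, rfl⟩; exact hw i)
  have := Submodule.finrank_mono h2
  omega

/-- Adding one new vector raises `finrank` by one. -/
lemma aux_finrank_sup_singleton (W' : Submodule K V) (x : V) (hx : x ∉ W') :
    finrank K ↥(W' ⊔ K ∙ x) = finrank K W' + 1 := by
  have hx0 : x ≠ 0 := fun h => hx (h ▸ W'.zero_mem)
  have hd : W' ⊓ (K ∙ x) = ⊥ := disjoint_iff.mp ((Submodule.disjoint_span_singleton' hx0).mpr hx)
  have h := Submodule.finrank_sup_add_finrank_inf_eq W' (K ∙ x)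
  rw [hd, finrank_span_singleton hx0, finrank_bot] at h
  omega

end Aux

/-- Trivial extension and upper radicals: with `H = H₀ ⊙ V₁` the trivial extension of the
hyperplane `H₀` of the `k`-Grassmannian of `V₀` (given by `φ₀`) by `V₁`, a `(k-1)`-subspace
`X` of `V` lies in `R^↑(H)` iff either `X ∩ V₁ ≠ 0` or `π(X) ∈ R^↑(H₀)`. -/
theorem stmt_8 (K V : Type*) [Field K] [AddCommGroup V] [Module K V] [FiniteDimensional K V]
    (n n₀ k : ℕ) (hn : finrank K V = n)
    (V₀ V₁ : Submodule K V) (hc : IsCompl V₀ V₁)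
    (hn₀ : finrank K V₀ = n₀) (hk : 3 ≤ k) (hkn₀ : k < n₀) (hn₀n : n₀ < n)
    (φ₀ : AlternatingMap K V₀ K (Fin k)) (hφ₀ : φ₀ ≠ 0)
    (φ : AlternatingMap K V K (Fin k))
    (hφ : ∀ v : Fin k → V,
      φ v = φ₀ (fun i => Submodule.linearProjOfIsCompl V₀ V₁ hc (v i)))
    (X : Submodule K V) (hX : finrank K X = k - 1) :
    (∀ U : Submodule K V, finrank K U = k → X ≤ U →
        ∀ v : Fin k → V, (∀ i, v i ∈ U) → φ v = 0) ↔
      (X ⊓ V₁ ≠ ⊥ ∨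
        (finrank K (X.map (Submodule.linearProjOfIsCompl V₀ V₁ hc)) = k - 1 ∧
          ∀ U₀ : Submodule K V₀, finrank K U₀ = k →
            X.map (Submodule.linearProjOfIsCompl V₀ V₁ hc) ≤ U₀ →
              ∀ w : Fin k → V₀, (∀ i, w i ∈ U₀) → φ₀ w = 0)) := by
  set π := Submodule.linearProjOfIsCompl V₀ V₁ hc with hπ
  have hker : LinearMap.ker π = V₁ := Submodule.linearProjOfIsCompl_ker hc
  constructor
  · intro h
    by_cases hXV₁ : X ⊓ V₁ = ⊥
    · right
      have hrn := aux_finrank_map_add π X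
      rw [hker, hXV₁, finrank_bot, Nat.add_zero, hX] at hrn
      refine ⟨hrn, ?_⟩
      intro U₀ hU₀ hle w hw
      have hlt : X.map π < U₀ := lt_of_le_of_ne hle (fun he => by rw [he, hU₀] at hrn; omega)
      obtain ⟨u₀, hu₀U, hu₀X⟩ := SetLike.exists_of_lt hlt
      set u : V := (u₀ : V) with hu
      have hπu : π u = u₀ := Submodule.linearProjOfIsCompl_apply_left hc u₀
      have huX : u ∉ X := fun hmem => hu₀X ⟨u, hmem, hπu⟩
      set U : Submodule K V := X ⊔ K ∙ u with hUdef
      have hXU : X ≤ U := le_sup_left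
      have hUrk : finrank K U = k := by
        rw [hUdef, aux_finrank_sup_singleton X u huX, hX]; omega
      have hmapU : U.map π = U₀ := by
        have he1 : U.map π = X.map π ⊔ (K ∙ u₀) := by
          rw [hUdef, Submodule.map_sup, Submodule.map_span, Set.image_singleton, hπu]
        have hle2 : U.map π ≤ U₀ := by
          rw [he1]
          exact sup_le hle ((Submodule.span_singleton_le_iff_mem _ _).mpr hu₀U)
        have hfr : finrank K (U.map π) = k := by
          rw [he1, aux_finrank_sup_singleton _ u₀ hu₀X, hrn]; omega
        exact Submodule.eq_of_le_of_finrank_le hle2 (by omega)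
      have hwU : ∀ i, ∃ x, x ∈ U ∧ π x = w i := by
        intro i
        have : w i ∈ U.map π := hmapU ▸ hw i
        exact Submodule.mem_map.mp this
      choose v hvU hvw using hwU
      have : φ₀ w = φ v := by
        rw [hφ v]
        exact congrArg φ₀ (funext fun i => (hvw i).symm)
      rw [this]
      exact h U hUrk hXU v hvU
    · exact Or.inl hXV₁
  · intro h U hU hXU v hv
    rw [hφ v]
    have hwU : ∀ i, π (v i) ∈ U.map π := fun i => ⟨v i, hv i, rfl⟩
    rcases h with hne | ⟨hrk, h₀⟩
    · have hrn := aux_finrank_map_add π U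
      rw [hker, hU] at hrn
      have hle : X ⊓ V₁ ≤ U ⊓ V₁ := inf_le_inf_right V₁ hXU
      have hne' : U ⊓ V₁ ≠ ⊥ := fun hb => hne (le_bot_iff.mp (hb ▸ hle))
      have hpos : 0 < finrank K ↥(U ⊓ V₁) := by
        rcases Nat.eq_zero_or_pos (finrank K ↥(U ⊓ V₁)) with h0 | h0
        · exact absurd (Submodule.finrank_eq_zero.mp h0) hne'
        · exact h0
      exact aux_alt_small φ₀ (U.map π) (by omega) _ hwU
    · by_cases hUk : finrank K (U.map π) = k
      · exact h₀ (U.map π) hUk (Submodule.map_mono hXU) _ hwU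
      · have hle : finrank K (U.map π) ≤ k := hU ▸ Submodule.finrank_map_le π U
        exact aux_alt_small φ₀ (U.map π) (by omega) _ hwU
end

section
/- Let H be a hyperplane of the k-Grassmannian of V whose lower radical R_↓(H) is nonempty, corresponding to the nonzero radical R of the defining alternating k-linear form φ. Let S be a complement of R in V. Then H equals the trivial extension of H(S) by R, where H(S) is the set of k-subspaces of S in H; i.e., a k-subspace X of V lies in H if and only if X ∩ R ≠ 0 or the projection of X to S (along R) lies in H(S). -/
open Module

/-- If the radical `R` of the nontrivial alternating `k`-form `φ` (`k = m + 1 ≥ 3`) defining a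
hyperplane `H` is nonzero and `S` is a complement of `R` in `V`, then `H` is the trivial
extension of `H(S)` by `R`: a `k`-subspace `X` lies in `H` iff `X ∩ R ≠ 0` or `φ` vanishes
identically on the projection of `X` to `S` along `R`. -/
theorem stmt_9 (K V : Type*) [Field K] [AddCommGroup V] [Module K V] [FiniteDimensional K V]
    (n m : ℕ) (hn : finrank K V = n) (hm : 2 ≤ m) (hmn : m + 1 < n)
    (φ : AlternatingMap K V K (Fin (m + 1))) (hφ : φ ≠ 0)
    (R : Submodule K V)
    (hR : ∀ x : V, x ∈ R ↔ ∀ v : Fin m → V, φ (Fin.snoc v x) = 0)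
    (hRne : R ≠ ⊥)
    (S : Submodule K V) (hcompl : IsCompl R S)
    (X : Submodule K V) (hX : finrank K X = m + 1) :
    (∀ v : Fin (m + 1) → V, (∀ i, v i ∈ X) → φ v = 0) ↔
      (X ⊓ R ≠ ⊥ ∨
        ∀ v : Fin (m + 1) → V,
          (∀ i, v i ∈ X.map
            (S.subtype ∘ₗ Submodule.linearProjOfIsCompl S R hcompl.symm)) → φ v = 0) := by
  classical
  set π : V →ₗ[K] V := S.subtype ∘ₗ Submodule.linearProjOfIsCompl S R hcompl.symm with hπ
  -- φ vanishes if its last argument is in R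
  have hA0 : ∀ v : Fin (m + 1) → V, v (Fin.last m) ∈ R → φ v = 0 := by
    intro v hv
    have := (hR (v (Fin.last m))).mp hv (Fin.init v)
    rwa [Fin.snoc_init_self] at this
  -- φ vanishes if any argument is in R
  have hA : ∀ (v : Fin (m + 1) → V) (j : Fin (m + 1)), v j ∈ R → φ v = 0 := by
    intro v j hv
    by_cases hj : j = Fin.last m
    · exact hA0 v (hj ▸ hv)
    · have hs := φ.map_swap v hj
      have h0 : φ (v ∘ Equiv.swap j (Fin.last m)) = 0 := by
        apply hA0
        simpa [Equiv.swap_apply_right] using hv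
      rw [hs] at h0
      exact neg_eq_zero.mp h0
  -- π kills R
  have hπR : ∀ r ∈ R, π r = 0 := by
    intro r hr
    have := Submodule.projectionOnto_apply_of_mem_right hcompl.symm hr
    simp [hπ, Submodule.linearProjOfIsCompl, this]
  -- x - π x ∈ R
  have hsub : ∀ x : V, x - π x ∈ R := by
    intro x
    have h := Submodule.projection_add_projection_eq_self hcompl.symm x
    have : x - π x = ((Submodule.linearProjOfIsCompl R S hcompl x : V)) := by
      simp only [hπ, LinearMap.comp_apply, Submodule.subtype_apply]
      exact sub_eq_of_eq_add' h.symm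
    rw [this]
    exact (Submodule.linearProjOfIsCompl R S hcompl x).2
  -- key: φ v = φ (π ∘ v)
  have hB : ∀ v : Fin (m + 1) → V, φ v = φ (fun i => π (v i)) := by
    intro v
    have key : ∀ j : ℕ, j ≤ m + 1 →
        φ v = φ (fun i => if (i : ℕ) < j then π (v i) else v i) := by
      intro j
      induction j with
      | zero => intro _; simp
      | succ j ih =>
        intro hj
        have hj' : j < m + 1 := hj
        rw [ih (le_of_lt hj')]
        set w : Fin (m + 1) → V := fun i => if (i : ℕ) < j then π (v i) else v i with hw
        have hwj : w ⟨j, hj'⟩ = v ⟨j, hj'⟩ := by simp [hw]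
        have heq : (fun i : Fin (m + 1) => if (i : ℕ) < j + 1 then π (v i) else v i)
            = Function.update w ⟨j, hj'⟩ (π (v ⟨j, hj'⟩)) := by
          funext i
          by_cases h : i = ⟨j, hj'⟩
          · subst h; simp
          · have hne : (i : ℕ) ≠ j := fun hc => h (Fin.ext hc)
            rw [Function.update_of_ne h]
            simp only [hw]
            by_cases h2 : (i : ℕ) < j
            · simp [h2, Nat.lt_succ_of_lt h2]
            · have h3 : ¬(i : ℕ) < j + 1 := by omega
              simp [h2, h3]
        rw [heq]
        have hzero : φ (Function.update w ⟨j, hj'⟩ (v ⟨j, hj'⟩ - π (v ⟨j, hj'⟩))) = 0 := by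
          apply hA _ ⟨j, hj'⟩
          rw [Function.update_self]
          exact hsub _
        rw [φ.map_update_sub,
          show Function.update w ⟨j, hj'⟩ (v ⟨j, hj'⟩) = w by
            rw [← hwj, Function.update_eq_self]] at hzero
        exact sub_eq_zero.mp hzero
    have h := key (m + 1) le_rfl
    have : (fun i : Fin (m + 1) => if (i : ℕ) < m + 1 then π (v i) else v i)
        = fun i => π (v i) := by
      funext i; simp [i.isLt]
    rwa [this] at h
  constructor
  · intro h
    right
    intro w hw
    choose x hxX hxw using fun i => Submodule.mem_map.mp (hw i)
    have hwx : w = fun i => π (x i) := funext fun i => (hxw i).symm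
    rw [hwx, ← hB x]
    exact h x hxX
  · rintro (hXR | h) v hv
    · -- X ∩ R ≠ ⊥: the projections of v are linearly dependent
      rw [hB v]
      apply φ.map_linearDependent
      intro hind
      -- finrank of X.map π ≤ m
      set f : X →ₗ[K] V := π ∘ₗ X.subtype with hf
      have hrange : LinearMap.range f = X.map π := by
        rw [hf, LinearMap.range_comp, Submodule.range_subtype]
      obtain ⟨r, hrmem, hrne⟩ := Submodule.exists_mem_ne_zero_of_ne_bot hXR
      have hker : (⟨r, hrmem.1⟩ : X) ∈ LinearMap.ker f := by
        simp only [hf, LinearMap.mem_ker, LinearMap.comp_apply, Submodule.subtype_apply]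
        exact hπR r hrmem.2
      have hkerpos : 0 < finrank K (LinearMap.ker f) := by
        rw [Module.finrank_pos_iff_exists_ne_zero]
        refine ⟨⟨⟨r, hrmem.1⟩, hker⟩, fun hc => hrne ?_⟩
        have := congrArg (fun z : LinearMap.ker f => ((z : X) : V)) hc
        simpa using this
      have hrn := LinearMap.finrank_range_add_finrank_ker f
      rw [hrange, hX] at hrn
      have hle : finrank K (X.map π) ≤ m := by omega
      have hspan : Submodule.span K (Set.range fun i => π (v i)) ≤ X.map π := by
        rw [Submodule.span_le]
        rintro _ ⟨i, rfl⟩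
        exact Submodule.mem_map_of_mem (hv i)
      have := finrank_span_eq_card hind
      have hmono := Submodule.finrank_mono hspan
      rw [this] at hmono
      simp only [Fintype.card_fin] at hmono
      omega
    · rw [hB v]
      exact h _ (fun i => Submodule.mem_map_of_mem (hv i))
end

section
/- A hyperplane H of the k-Grassmannian of V is trivial (i.e., equals {X : dim X = k, X ∩ R ≠ 0} for some subspace R of codimension k) if and only if the radical of its defining alternating k-linear form has codimension exactly k in V. -/
open Module

section Aux

variable {K V : Type*} [Field K] [AddCommGroup V] [Module K V]
  {m : ℕ} (φ : AlternatingMap K V K (Fin (m + 1))) (Rad : Submodule K V)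
  (hRad : ∀ x : V, x ∈ Rad ↔ ∀ v : Fin m → V, φ (Fin.snoc v x) = 0)

include hRad

/-- If any slot lies in the radical, φ vanishes. -/
theorem aux_slot (v : Fin (m + 1) → V) (j : Fin (m + 1)) (hj : v j ∈ Rad) :
    φ v = 0 := by
  set σ := Equiv.swap j (Fin.last m) with hσ
  have h1 : φ (v ∘ σ) = Equiv.Perm.sign σ • φ v := φ.map_perm v σ
  have h2 : (v ∘ σ) (Fin.last m) = v j := by
    simp [hσ, Equiv.swap_apply_right]
  have h3 : φ (v ∘ σ) = 0 := by
    rw [← Fin.snoc_init_self (v ∘ σ), h2]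
    exact (hRad _).mp hj _
  rw [h3] at h1
  rcases Int.units_eq_one_or (Equiv.Perm.sign σ) with h | h <;> rw [h] at h1
  · simpa using h1.symm
  · have h4 : -φ v = 0 := by simpa using h1.symm
    exact neg_eq_zero.mp h4

/-- If `X` has dimension `m+1` and meets the radical nontrivially, φ vanishes on `X`. -/
theorem aux_vanish [FiniteDimensional K V] (X : Submodule K V)
    (hX : finrank K X = m + 1) (x : V) (hxX : x ∈ X) (hxR : x ∈ Rad) (hx : x ≠ 0)
    (v : Fin (m + 1) → V) (hv : ∀ i, v i ∈ X) : φ v = 0 := by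
  by_cases hli : LinearIndependent K v
  · have hspan : Submodule.span K (Set.range v) = X := by
      apply Submodule.eq_of_le_of_finrank_eq
      · rw [Submodule.span_le]; rintro _ ⟨i, rfl⟩; exact hv i
      · rw [finrank_span_eq_card hli, hX]; simp
    have hxs : x ∈ Submodule.span K (Set.range v) := hspan ▸ hxX
    obtain ⟨c, hc⟩ := (Submodule.mem_span_range_iff_exists_fun K).mp hxs
    obtain ⟨j, hj⟩ : ∃ j, c j ≠ 0 := by
      by_contra h
      push_neg at h
      apply hx
      rw [← hc]
      simp [h]
    have h0 : φ (Function.update v j x) = 0 :=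
      aux_slot φ Rad hRad _ j (by simpa using hxR)
    rw [← hc, φ.map_update_sum] at h0
    rw [Finset.sum_eq_single j] at h0
    · rw [φ.map_update_smul, Function.update_eq_self] at h0
      exact (smul_eq_zero.mp h0).resolve_left hj
    · intro i _ hij
      rw [φ.map_update_smul, φ.map_update_self v hij.symm, smul_zero]
    · simp
  · exact φ.map_linearDependent v hli

end Aux

/-- A hyperplane `H` of the `k`-Grassmannian (`k = m + 1 ≥ 3`) defined by a nontrivial
alternating `k`-form `φ` is trivial — i.e. equals `{X : dim X = k, X ∩ R' ≠ 0}` for some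
subspace `R'` of codimension `k` — iff the radical of `φ` has codimension exactly `k`. -/
theorem stmt_10 (K V : Type*) [Field K] [AddCommGroup V] [Module K V] [FiniteDimensional K V]
    (n m : ℕ) (hn : finrank K V = n) (hm : 2 ≤ m) (hmn : m + 1 < n)
    (φ : AlternatingMap K V K (Fin (m + 1))) (hφ : φ ≠ 0)
    (Rad : Submodule K V)
    (hRad : ∀ x : V, x ∈ Rad ↔ ∀ v : Fin m → V, φ (Fin.snoc v x) = 0) :
    (∃ R' : Submodule K V, finrank K R' + (m + 1) = n ∧
        ∀ X : Submodule K V, finrank K X = m + 1 →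
          ((∀ v : Fin (m + 1) → V, (∀ i, v i ∈ X) → φ v = 0) ↔ X ⊓ R' ≠ ⊥)) ↔
      finrank K Rad + (m + 1) = n := by
  -- (B): the radical always has codimension at least m+1
  have hB : finrank K Rad + (m + 1) ≤ n := by
    by_contra h
    push_neg at h
    apply hφ
    ext v
    by_cases hli : LinearIndependent K v
    · set X := Submodule.span K (Set.range v) with hXdef
      have hX : finrank K X = m + 1 := by
        rw [hXdef, finrank_span_eq_card hli]; simp
      have hpos : 0 < finrank K (X ⊓ Rad : Submodule K V) := by
        have hsup : finrank K (X ⊔ Rad : Submodule K V) ≤ n := hn ▸ Submodule.finrank_le _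
        have := Submodule.finrank_sup_add_finrank_inf_eq X Rad
        omega
      have hnb : X ⊓ Rad ≠ ⊥ := fun hb => by
        rw [hb, finrank_bot] at hpos; omega
      obtain ⟨x, hxmem, hx0⟩ := (Submodule.ne_bot_iff _).mp hnb
      obtain ⟨hx1, hx2⟩ := Submodule.mem_inf.mp hxmem
      simpa using aux_vanish φ Rad hRad X hX x hx1 hx2 hx0 v
        fun i => Submodule.subset_span ⟨i, rfl⟩
    · simp [φ.map_linearDependent v hli]
  constructor
  · -- → : given trivializing R', show codim Rad = m+1
    rintro ⟨R', hR'dim, hprop⟩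
    have hsub : R' ≤ Rad := by
      intro r hr
      by_cases hr0 : r = 0
      · simp [hr0]
      rw [hRad]
      intro v
      by_cases hli : LinearIndependent K (Fin.snoc v r : Fin (m + 1) → V)
      · set X := Submodule.span K (Set.range (Fin.snoc v r : Fin (m + 1) → V)) with hXdef
        have hX : finrank K X = m + 1 := by
          rw [hXdef, finrank_span_eq_card hli]; simp
        have hrX : r ∈ X := by
          apply Submodule.subset_span
          exact ⟨Fin.last m, by simp⟩
        have hne : X ⊓ R' ≠ ⊥ := by
          intro hbot
          exact hr0 (by simpa [hbot] using Submodule.mem_inf.mpr ⟨hrX, hr⟩ : r ∈ (⊥ : Submodule K V)) |>.elim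
        exact (hprop X hX).mpr hne _ fun i => Submodule.subset_span ⟨i, rfl⟩
      · exact φ.map_linearDependent _ hli
    have := Submodule.finrank_mono hsub
    omega
  · -- ← : Rad itself works
    intro hcodim
    refine ⟨Rad, hcodim, fun X hX => ?_⟩
    constructor
    · -- vanish → meets Rad
      intro hvan
      intro hbot
      -- X ⊓ Rad = ⊥ and dims add up, so V = X ⊕ Rad; φ determined by values on X ⇒ φ = 0
      have hsup : X ⊔ Rad = ⊤ := by
        apply Submodule.eq_top_of_finrank_eq
        have := Submodule.finrank_sup_add_finrank_inf_eq X Rad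
        rw [hbot] at this
        simp only [finrank_bot, add_zero] at this
        omega
      apply hφ
      ext u
      -- decompose each u i
      have hdec : ∀ i, ∃ x ∈ X, ∃ rr ∈ Rad, x + rr = u i := by
        intro i
        have : u i ∈ X ⊔ Rad := by rw [hsup]; trivial
        exact Submodule.mem_sup.mp this
      choose xf hxf rf hrf hsum using hdec
      have hu : u = xf + rf := by
        funext i
        simp [Pi.add_apply, ← hsum i]
      have key : φ (xf + rf) = ∑ s : Finset (Fin (m + 1)), φ (s.piecewise xf rf) :=
        φ.toMultilinearMap.map_add_univ xf rf
      rw [hu, key]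
      apply Finset.sum_eq_zero
      intro s _
      by_cases hs : s = Finset.univ
      · subst hs
        rw [Finset.piecewise_univ]
        exact hvan xf hxf
      · obtain ⟨i, hi⟩ : ∃ i, i ∉ s := by
          by_contra h
          push_neg at h
          exact hs (Finset.eq_univ_iff_forall.mpr h)
        apply aux_slot φ Rad hRad _ i
        rw [Finset.piecewise_eq_of_notMem _ _ _ hi]
        exact hrf i
    · -- meets Rad → vanish
      intro hne v hv
      obtain ⟨x, hxmem, hx0⟩ := (Submodule.ne_bot_iff _).mp hne
      obtain ⟨hx1, hx2⟩ := Submodule.mem_inf.mp hxmem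
      exact aux_vanish φ Rad hRad X hX x hx1 hx2 hx0 v hv
end

section
/- Let V₀ be a hyperplane (codimension-1 subspace) of V and H₀ a hyperplane of the (k−1)-Grassmannian of V₀. Then the expansion E(H₀) = {X : dim X = k, and either X ⊆ V₀ or X ∩ V₀ ∈ H₀} is a hyperplane of the k-Grassmannian of V: it is a proper subset meeting every line ℓ_{Y,Z} of the k-Grassmannian in a single point or the whole line. -/
open Module

/-- `H` is a hyperplane of the `k`-Grassmannian of the subspace `W` of `V`: all its members are
`k`-subspaces of `W`, it is proper, and it meets every line `ℓ_{Y,Z}` of the `k`-Grassmannian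
of `W` in a single point or the whole line. -/
def IsGrassHyperplane {K V : Type*} [Field K] [AddCommGroup V] [Module K V]
    (W : Submodule K V) (k : ℕ) (H : Set (Submodule K V)) : Prop :=
  (∀ X ∈ H, X ≤ W ∧ finrank K X = k) ∧
  (∃ X : Submodule K V, X ≤ W ∧ finrank K X = k ∧ X ∉ H) ∧
  (∀ Y Z : Submodule K V, Z ≤ W → finrank K Y = k - 1 → finrank K Z = k + 1 → Y ≤ Z →
    ({X : Submodule K V | Y ≤ X ∧ X ≤ Z ∧ finrank K X = k} ⊆ H ∨
      ∃ X₀ : Submodule K V,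
        {X : Submodule K V | Y ≤ X ∧ X ≤ Z ∧ finrank K X = k} ∩ H = {X₀}))

/-- If `X` is not contained in the hyperplane `V₀`, then `X ⊓ V₀` has codimension 1 in `X`. -/
lemma inf_hyp_finrank {K V : Type*} [Field K] [AddCommGroup V] [Module K V]
    [FiniteDimensional K V] {n : ℕ} (hn : finrank K V = n) {V₀ : Submodule K V}
    (hV₀ : finrank K V₀ + 1 = n) (X : Submodule K V) (hX : ¬ X ≤ V₀) :
    finrank K ↥(X ⊓ V₀) + 1 = finrank K ↥X := by
  have hlt : V₀ < X ⊔ V₀ :=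
    lt_of_le_of_ne le_sup_right (fun h => hX (by rw [h]; exact le_sup_left))
  have h1 : finrank K ↥V₀ < finrank K ↥(X ⊔ V₀) := Submodule.finrank_lt_finrank_of_lt hlt
  have h2 : finrank K ↥(X ⊔ V₀) ≤ finrank K V := Submodule.finrank_le _
  have hsup : finrank K ↥(X ⊔ V₀) = n := by omega
  have hform := Submodule.finrank_sup_add_finrank_inf_eq X V₀
  omega

/-- The expansion `E(H₀) = {X : dim X = k, X ⊆ V₀ or X ∩ V₀ ∈ H₀}` of a hyperplane `H₀` of the
`(k-1)`-Grassmannian of a hyperplane `V₀` of `V` is a hyperplane of the `k`-Grassmannian of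
`V`. -/
theorem stmt_11 (K V : Type*) [Field K] [AddCommGroup V] [Module K V] [FiniteDimensional K V]
    (n k : ℕ) (hn : finrank K V = n) (hn4 : 4 ≤ n) (hk : 3 ≤ k) (hkn : k < n)
    (V₀ : Submodule K V) (hV₀ : finrank K V₀ + 1 = n)
    (H₀ : Set (Submodule K V)) (hH₀ : IsGrassHyperplane V₀ (k - 1) H₀) :
    IsGrassHyperplane (⊤ : Submodule K V) k
      {X : Submodule K V | finrank K X = k ∧ (X ≤ V₀ ∨ X ⊓ V₀ ∈ H₀)} := by
  obtain ⟨hH1, ⟨A, hAV₀, hAr, hAH⟩, hH3⟩ := hH₀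
  refine ⟨fun X hX => ⟨le_top, hX.1⟩, ?_, ?_⟩
  · -- properness
    have hV₀top : V₀ ≠ ⊤ := by
      intro h; rw [h, finrank_top, hn] at hV₀; omega
    obtain ⟨v, hv⟩ : ∃ v, v ∉ V₀ := by
      by_contra h; push_neg at h; exact hV₀top (Submodule.eq_top_iff'.mpr h)
    have hv0 : v ≠ 0 := fun h => hv (h ▸ V₀.zero_mem)
    set X := A ⊔ Submodule.span K {v} with hXdef
    have hvA : v ∉ A := fun h => hv (hAV₀ h)
    have hinf : A ⊓ Submodule.span K {v} = ⊥ := by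
      rw [eq_bot_iff]
      rintro w ⟨hwA, hws⟩
      obtain ⟨c, rfl⟩ := Submodule.mem_span_singleton.mp hws
      rcases eq_or_ne c 0 with rfl | hc
      · simp
      · exact absurd ((A.smul_mem_iff hc).mp hwA) hvA
    have hrX : finrank K ↥X = k := by
      have hform := Submodule.finrank_sup_add_finrank_inf_eq A (Submodule.span K {v})
      rw [← hXdef, hinf, finrank_bot, finrank_span_singleton hv0, hAr] at hform
      omega
    have hXV₀ : ¬ X ≤ V₀ := fun h =>
      hv (h (Submodule.mem_sup_right (Submodule.mem_span_singleton_self v)))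
    have hXinf : X ⊓ V₀ = A := by
      have h5 := inf_hyp_finrank hn hV₀ X hXV₀
      exact ((Submodule.eq_of_le_of_finrank_eq (le_inf (show A ≤ X from le_sup_left) hAV₀)
        (by omega))).symm
    refine ⟨X, le_top, hrX, ?_⟩
    rintro ⟨-, h | h⟩
    · exact hXV₀ h
    · rw [hXinf] at h; exact hAH h
  · intro Y Z _ hY hZ hYZ
    by_cases hZV : Z ≤ V₀
    · left; rintro X ⟨-, hXZ, hXr⟩; exact ⟨hXr, Or.inl (hXZ.trans hZV)⟩
    · have hZ' := inf_hyp_finrank hn hV₀ Z hZV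
      by_cases hYV : Y ≤ V₀
      · -- case: Y ≤ V₀, Z ⊄ V₀
        have hYle : Y ≤ Z ⊓ V₀ := le_inf hYZ hYV
        have key : ∀ X : Submodule K V, Y ≤ X → finrank K ↥X = k → ¬ X ≤ V₀ →
            X ⊓ V₀ = Y := by
          intro X h1 h3 h4
          have h5 := inf_hyp_finrank hn hV₀ X h4
          exact ((Submodule.eq_of_le_of_finrank_eq (le_inf h1 hYV) (by omega))).symm
        by_cases hYH : Y ∈ H₀
        · left
          rintro X ⟨h1, h2, h3⟩
          by_cases h4 : X ≤ V₀
          · exact ⟨h3, Or.inl h4⟩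
          · refine ⟨h3, Or.inr ?_⟩
            rw [key X h1 h3 h4]; exact hYH
        · right
          refine ⟨Z ⊓ V₀, Set.eq_singleton_iff_unique_mem.mpr ⟨⟨⟨hYle, inf_le_left, by omega⟩,
            by omega, Or.inl inf_le_right⟩, ?_⟩⟩
          rintro X ⟨⟨h1, h2, h3⟩, -, h5 | h5⟩
          · exact Submodule.eq_of_le_of_finrank_eq (le_inf h2 h5) (by omega)
          · exfalso
            by_cases h4 : X ≤ V₀
            · rw [inf_eq_left.mpr h4] at h5
              have : X ≤ Z ⊓ V₀ := le_inf h2 h4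
              have := Submodule.eq_of_le_of_finrank_eq this (by omega)
              -- X = Z ⊓ V₀, but also X ∈ H₀ would give finrank X = k-1, contradiction
              have := (hH1 X h5).2
              omega
            · rw [key X h1 h3 h4] at h5; exact hYH h5
      · -- case: Y ⊄ V₀, Z ⊄ V₀
        have hY' := inf_hyp_finrank hn hV₀ Y hYV
        have hY'r : finrank K ↥(Y ⊓ V₀) = k - 1 - 1 := by omega
        have hZ'r : finrank K ↥(Z ⊓ V₀) = k - 1 + 1 := by omega
        have hYZ' : Y ⊓ V₀ ≤ Z ⊓ V₀ := inf_le_inf_right _ hYZ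
        have lineX : ∀ X : Submodule K V, Y ≤ X → X ≤ Z → finrank K ↥X = k →
            Y ⊓ V₀ ≤ X ⊓ V₀ ∧ X ⊓ V₀ ≤ Z ⊓ V₀ ∧ finrank K ↥(X ⊓ V₀) = k - 1 := by
          intro X h1 h2 h3
          have h4 : ¬ X ≤ V₀ := fun h => hYV (h1.trans h)
          have h5 := inf_hyp_finrank hn hV₀ X h4
          exact ⟨inf_le_inf_right _ h1, inf_le_inf_right _ h2, by omega⟩
        have recon : ∀ X : Submodule K V, Y ≤ X → X ≤ Z → finrank K ↥X = k →
            Y ⊔ (X ⊓ V₀) = X := by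
          intro X h1 h2 h3
          have h4 : ¬ X ≤ V₀ := fun h => hYV (h1.trans h)
          have h5 := inf_hyp_finrank hn hV₀ X h4
          apply Submodule.eq_of_le_of_finrank_eq (sup_le h1 inf_le_left)
          have hform := Submodule.finrank_sup_add_finrank_inf_eq Y (X ⊓ V₀)
          have hYinf : Y ⊓ (X ⊓ V₀) = Y ⊓ V₀ := by
            rw [← inf_assoc, inf_eq_left.mpr h1]
          rw [hYinf] at hform
          omega
        rcases hH3 (Y ⊓ V₀) (Z ⊓ V₀) inf_le_right hY'r hZ'r hYZ' with hsub | ⟨W₀, hW₀⟩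
        · left
          rintro X ⟨h1, h2, h3⟩
          exact ⟨h3, Or.inr (hsub (lineX X h1 h2 h3))⟩
        · right
          have hW₀mem : W₀ ∈ {W : Submodule K V | Y ⊓ V₀ ≤ W ∧ W ≤ Z ⊓ V₀ ∧
              finrank K ↥W = k - 1} ∩ H₀ := by rw [hW₀]; rfl
          obtain ⟨⟨hW1, hW2, hW3⟩, hWH⟩ := hW₀mem
          have hW₀V : W₀ ≤ V₀ := hW2.trans inf_le_right
          have hYW : Y ⊓ W₀ = Y ⊓ V₀ :=
            le_antisymm (le_inf inf_le_left ((inf_le_inf_left Y hW₀V).trans inf_le_right))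
              (le_inf inf_le_left hW1)
          have hX₀r : finrank K ↥(Y ⊔ W₀) = k := by
            have hform := Submodule.finrank_sup_add_finrank_inf_eq Y W₀
            rw [hYW] at hform
            omega
          have hX₀nV : ¬ Y ⊔ W₀ ≤ V₀ := fun h => hYV (le_sup_left.trans h)
          have hX₀inf : (Y ⊔ W₀) ⊓ V₀ = W₀ := by
            have h5 := inf_hyp_finrank hn hV₀ (Y ⊔ W₀) hX₀nV
            exact ((Submodule.eq_of_le_of_finrank_eq (le_inf le_sup_right hW₀V)
              (by omega))).symm
          refine ⟨Y ⊔ W₀, Set.eq_singleton_iff_unique_mem.mpr ⟨⟨⟨le_sup_left,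
            sup_le hYZ (hW2.trans inf_le_left), hX₀r⟩, hX₀r, Or.inr (by rw [hX₀inf]; exact hWH)⟩,
            ?_⟩⟩
          rintro X ⟨⟨h1, h2, h3⟩, -, h5 | h5⟩
          · exact absurd (h1.trans h5) hYV
          · have hXinfmem : X ⊓ V₀ ∈ ({W₀} : Set (Submodule K V)) := by
              rw [← hW₀]; exact ⟨lineX X h1 h2 h3, h5⟩
            rw [← recon X h1 h2 h3, hXinfmem]
end

section
/- With E(H₀) the expansion to V of a hyperplane H₀ of the (k−1)-Grassmannian of a hyperplane V₀ of V, the lower radicals coincide: a 1-dimensional subspace p of V satisfies 'every k-subspace of V containing p is in E(H₀)' if and only if p ⊆ V₀ and every (k−1)-subspace of V₀ containing p lies in H₀. -/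
open Module

lemma aux_inf_hyp {K V : Type*} [Field K] [AddCommGroup V] [Module K V]
    [FiniteDimensional K V]
    (V₀ : Submodule K V) (hV₀ : finrank K V₀ + 1 = finrank K V)
    (X : Submodule K V) (hX : ¬ X ≤ V₀) :
    finrank K ↥(X ⊓ V₀) + 1 = finrank K X := by
  have h1 : V₀ < X ⊔ V₀ := lt_of_le_of_ne le_sup_right (by
    intro h; exact hX (by rw [h]; exact le_sup_left))
  have h2 := Submodule.finrank_lt_finrank_of_lt h1
  have h3 : finrank K ↥(X ⊔ V₀) ≤ finrank K V := Submodule.finrank_le _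
  have htop : X ⊔ V₀ = ⊤ := Submodule.eq_top_of_finrank_eq (by omega)
  have h4 := Submodule.finrank_sup_add_finrank_inf_eq X V₀
  rw [htop, finrank_top] at h4
  omega

lemma aux_disj_sup {K V : Type*} [Field K] [AddCommGroup V] [Module K V]
    [FiniteDimensional K V]
    (Y Q : Submodule K V) (h : Y ⊓ Q = ⊥) :
    finrank K ↥(Y ⊔ Q) = finrank K Y + finrank K Q := by
  have h4 := Submodule.finrank_sup_add_finrank_inf_eq Y Q
  rw [h, finrank_bot] at h4
  omega

/-- Lower radicals coincide under expansion: a `1`-subspace `p` of `V` has all `k`-subspaces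
through it in `E(H₀)` iff `p ⊆ V₀` and all `(k-1)`-subspaces of `V₀` through `p` are in
`H₀`. -/
theorem stmt_12 (K V : Type*) [Field K] [AddCommGroup V] [Module K V] [FiniteDimensional K V]
    (n k : ℕ) (hn : finrank K V = n) (hn4 : 4 ≤ n) (hk : 3 ≤ k) (hkn : k < n)
    (V₀ : Submodule K V) (hV₀ : finrank K V₀ + 1 = n)
    (H₀ : Set (Submodule K V)) (hH₀ : IsGrassHyperplane V₀ (k - 1) H₀)
    (E : Set (Submodule K V))
    (hE : E = {X : Submodule K V | finrank K X = k ∧ (X ≤ V₀ ∨ X ⊓ V₀ ∈ H₀)})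
    (p : Submodule K V) (hp : finrank K p = 1) :
    (∀ X : Submodule K V, finrank K X = k → p ≤ X → X ∈ E) ↔
      (p ≤ V₀ ∧ ∀ Y : Submodule K V, Y ≤ V₀ → finrank K Y = k - 1 → p ≤ Y → Y ∈ H₀) := by
  have hV₀' : finrank K V₀ + 1 = finrank K V := by omega
  constructor
  · intro hall
    have hpV₀ : p ≤ V₀ := by
      by_contra hpn
      -- p ⊓ V₀ = ⊥
      have hlt : p ⊓ V₀ < p := lt_of_le_of_ne inf_le_left (by
        intro h; exact hpn (by rw [← h]; exact inf_le_right))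
      have hbot : p ⊓ V₀ = ⊥ := by
        have := Submodule.finrank_lt_finrank_of_lt hlt
        exact Submodule.finrank_eq_zero.mp (by omega)
      obtain ⟨Y, hYV₀, hYd, hYH⟩ := hH₀.2.1
      have hYpbot : Y ⊓ p = ⊥ := by
        refine le_bot_iff.mp ?_
        intro x hx
        have : x ∈ p ⊓ V₀ := ⟨hx.2, hYV₀ hx.1⟩
        rw [hbot] at this; exact this
      set X := Y ⊔ p with hXdef
      have hXd : finrank K ↥X = k := by
        rw [aux_disj_sup Y p hYpbot, hYd, hp]; omega
      have hXn : ¬ X ≤ V₀ := fun h => hpn (le_trans le_sup_right h)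
      have hXE := hall X hXd (le_sup_right)
      rw [hE] at hXE
      rcases hXE.2 with h | h
      · exact hXn h
      · -- X ⊓ V₀ = Y
        have h1 : Y ≤ X ⊓ V₀ := le_inf le_sup_left hYV₀
        have h2 := aux_inf_hyp V₀ hV₀' X hXn
        have hEq : Y = X ⊓ V₀ :=
          Submodule.eq_of_le_of_finrank_eq h1 (by rw [hYd]; omega)
        rw [← hEq] at h
        exact hYH h
    refine ⟨hpV₀, fun Y hYV₀ hYd hpY => ?_⟩
    -- pick v ∉ V₀
    have hV₀ne : V₀ < ⊤ := lt_top_iff_ne_top.mpr (by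
      intro h; rw [h] at hV₀'; rw [finrank_top] at hV₀'; omega)
    obtain ⟨v, hvT, hvV₀⟩ := SetLike.exists_of_lt hV₀ne
    have hYvbot : Y ⊓ Submodule.span K {v} = ⊥ := by
      refine le_bot_iff.mp ?_
      intro x hx
      obtain ⟨c, rfl⟩ := Submodule.mem_span_singleton.mp hx.2
      rcases eq_or_ne c 0 with rfl | hc
      · simp
      · exfalso
        have : v ∈ Y := by
          have := Y.smul_mem c⁻¹ hx.1
          rwa [inv_smul_smul₀ hc] at this
        exact hvV₀ (hYV₀ this)
    have hvne : v ≠ 0 := fun h => hvV₀ (h ▸ V₀.zero_mem)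
    set X := Y ⊔ Submodule.span K {v} with hXdef
    have hXd : finrank K ↥X = k := by
      rw [aux_disj_sup Y _ hYvbot, hYd, finrank_span_singleton hvne]; omega
    have hXn : ¬ X ≤ V₀ := fun h =>
      hvV₀ (h (Submodule.mem_sup_right (Submodule.mem_span_singleton_self v)))
    have hXE := hall X hXd (le_trans hpY le_sup_left)
    rw [hE] at hXE
    rcases hXE.2 with h | h
    · exact absurd h hXn
    · have h1 : Y ≤ X ⊓ V₀ := le_inf le_sup_left hYV₀
      have h2 := aux_inf_hyp V₀ hV₀' X hXn
      have hEq : Y = X ⊓ V₀ :=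
        Submodule.eq_of_le_of_finrank_eq h1 (by rw [hYd]; omega)
      rw [hEq]; exact h
  · rintro ⟨hpV₀, hY⟩ X hXd hpX
    rw [hE]
    refine ⟨hXd, ?_⟩
    by_cases hXV₀ : X ≤ V₀
    · exact Or.inl hXV₀
    · right
      have h2 := aux_inf_hyp V₀ hV₀' X hXV₀
      exact hY (X ⊓ V₀) inf_le_right (by omega) (le_inf hpX hpV₀)
end

section
/- Let k = 3, H₀ a hyperplane of the 2-Grassmannian of a hyperplane V₀ of V whose associated symplectic polar space S(H₀) is non-degenerate (its radical is empty). Then the upper radical of the expansion E(H₀) equals H₀: a 2-dimensional subspace A of V satisfies 'every 3-subspace of V containing A lies in E(H₀)' if and only if A ∈ H₀. -/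
open Module

/-- For `k = 3` and `H₀` the hyperplane of the 2-Grassmannian of a hyperplane `V₀` of `V`
attached to a non-degenerate alternating bilinear form `β` on `V₀`, the upper radical of the
expansion `E(H₀)` is exactly `H₀`: a `2`-subspace `A` of `V` has every `3`-subspace through it
in `E(H₀)` iff `A ∈ H₀`. -/
theorem stmt_13 (K V : Type*) [Field K] [AddCommGroup V] [Module K V] [FiniteDimensional K V]
    (n : ℕ) (hn : finrank K V = n) (hn5 : 5 ≤ n) (hodd : Odd n)
    (V₀ : Submodule K V) (hV₀ : finrank K V₀ + 1 = n)
    (β : V₀ →ₗ[K] V₀ →ₗ[K] K) (halt : ∀ x : V₀, β x x = 0)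
    (hnd : ∀ x : V₀, (∀ y : V₀, β x y = 0) → x = 0)
    (H₀ : Set (Submodule K V))
    (hH₀ : H₀ = {X : Submodule K V | X ≤ V₀ ∧ finrank K X = 2 ∧
      ∀ x y : V₀, (x : V) ∈ X → (y : V) ∈ X → β x y = 0})
    (E : Set (Submodule K V))
    (hE : E = {X : Submodule K V | finrank K X = 3 ∧ (X ≤ V₀ ∨ X ⊓ V₀ ∈ H₀)})
    (A : Submodule K V) (hA : finrank K A = 2) :
    (∀ U : Submodule K V, finrank K U = 3 → A ≤ U → U ∈ E) ↔ A ∈ H₀ := by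
  subst hH₀ hE
  -- helper: any subspace not contained in the hyperplane V₀ sups with it to ⊤
  have hsup : ∀ p : Submodule K V, ¬ p ≤ V₀ → p ⊔ V₀ = ⊤ := by
    intro p hp
    apply Submodule.eq_top_of_finrank_eq
    have hlt : V₀ < p ⊔ V₀ := lt_of_le_of_ne le_sup_right (by
      intro hEq
      exact hp (hEq ▸ (le_sup_left : p ≤ p ⊔ V₀)))
    have h1 : finrank K V₀ < finrank K ↥(p ⊔ V₀) := Submodule.finrank_lt_finrank_of_lt hlt
    have h2 : finrank K ↥(p ⊔ V₀) ≤ finrank K V := Submodule.finrank_le _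
    omega
  -- helper: a 3-subspace not in V₀ meets V₀ in dimension 2
  have hinf : ∀ U : Submodule K V, finrank K U = 3 → ¬ U ≤ V₀ →
      finrank K ↥(U ⊓ V₀) = 2 := by
    intro U hU3 hUle
    have := Submodule.finrank_sup_add_finrank_inf_eq U V₀
    rw [hsup U hUle, finrank_top] at this
    omega
  constructor
  · -- hard direction
    intro h
    by_cases hAle : A ≤ V₀
    · -- pick v ∉ V₀
      obtain ⟨v, hv⟩ : ∃ v, v ∉ V₀ := by
        by_contra hc
        push_neg at hc
        have htop : V₀ = ⊤ := eq_top_iff.mpr fun x _ => hc x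
        rw [htop, finrank_top] at hV₀
        omega
      have hv0 : v ≠ 0 := fun h0 => hv (h0 ▸ V₀.zero_mem)
      have hvU : v ∈ A ⊔ (K ∙ v) :=
        (le_sup_right : (K ∙ v) ≤ _) (Submodule.mem_span_singleton_self v)
      have hUnle : ¬ A ⊔ (K ∙ v) ≤ V₀ := fun hle => hv (hle hvU)
      have hbot : A ⊓ (K ∙ v) = ⊥ := by
        rw [eq_bot_iff]
        rintro x ⟨hxA, hxv⟩
        obtain ⟨c, rfl⟩ := Submodule.mem_span_singleton.mp hxv
        rcases eq_or_ne c 0 with rfl | hc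
        · simp
        · exact absurd (V₀.smul_mem c⁻¹ (hAle hxA)) (by
            rwa [inv_smul_smul₀ hc])
      have hU3 : finrank K ↥(A ⊔ (K ∙ v)) = 3 := by
        have := Submodule.finrank_sup_add_finrank_inf_eq A (K ∙ v)
        rw [hbot, finrank_bot, finrank_span_singleton hv0, hA] at this
        omega
      obtain ⟨-, hcase⟩ := h _ hU3 le_sup_left
      rcases hcase with hle | hmem
      · exact absurd hle hUnle
      · have hAeq : A = (A ⊔ (K ∙ v)) ⊓ V₀ :=
          Submodule.eq_of_le_of_finrank_eq (le_inf le_sup_left hAle)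
            (by rw [hA, hinf _ hU3 hUnle])
        rw [hAeq]; exact hmem
    · -- A ⊄ V₀ : contradiction with non-degeneracy
      exfalso
      have h1 : finrank K ↥(A ⊓ V₀) = 1 := by
        have := Submodule.finrank_sup_add_finrank_inf_eq A V₀
        rw [hsup A hAle, finrank_top] at this
        omega
      have hne : A ⊓ V₀ ≠ ⊥ := by
        intro hb
        rw [hb, finrank_bot] at h1
        omega
      obtain ⟨a₀, ha₀mem, ha₀ne⟩ := Submodule.exists_mem_ne_zero_of_ne_bot hne
      have hspan : (K ∙ a₀) = A ⊓ V₀ :=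
        Submodule.eq_of_le_of_finrank_eq
          ((Submodule.span_singleton_le_iff_mem _ _).mpr ha₀mem)
          (by rw [finrank_span_singleton ha₀ne, h1])
      set a : V₀ := ⟨a₀, ha₀mem.2⟩ with ha_def
      have key : ∀ y : V₀, β a y = 0 := by
        intro y
        by_cases hy : (y : V) ∈ A
        · have hy' : (y : V) ∈ K ∙ a₀ := hspan ▸ (Submodule.mem_inf.mpr ⟨hy, y.2⟩)
          obtain ⟨c, hc⟩ := Submodule.mem_span_singleton.mp hy'
          have hyc : y = c • a := Subtype.ext (by simp [ha_def, ← hc])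
          rw [hyc, map_smul, smul_eq_mul, halt a, mul_zero]
        · have hy0 : (y : V) ≠ 0 := fun h0 => hy (h0 ▸ A.zero_mem)
          have hyU : (y : V) ∈ A ⊔ (K ∙ (y : V)) :=
            (le_sup_right : (K ∙ (y : V)) ≤ _) (Submodule.mem_span_singleton_self _)
          have hbot : A ⊓ (K ∙ (y : V)) = ⊥ := by
            rw [eq_bot_iff]
            rintro x ⟨hxA, hxv⟩
            obtain ⟨c, rfl⟩ := Submodule.mem_span_singleton.mp hxv
            rcases eq_or_ne c 0 with rfl | hc
            · simp
            · exact absurd (A.smul_mem c⁻¹ hxA) (by rwa [inv_smul_smul₀ hc])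
          have hU3 : finrank K ↥(A ⊔ (K ∙ (y : V))) = 3 := by
            have := Submodule.finrank_sup_add_finrank_inf_eq A (K ∙ (y : V))
            rw [hbot, finrank_bot, finrank_span_singleton hy0, hA] at this
            omega
          have hUnle : ¬ A ⊔ (K ∙ (y : V)) ≤ V₀ :=
            fun hle => hAle (le_sup_left.trans hle)
          obtain ⟨-, hcase⟩ := h _ hU3 le_sup_left
          rcases hcase with hle | hmem
          · exact absurd hle hUnle
          · exact hmem.2.2 a y
              (Submodule.mem_inf.mpr ⟨(le_sup_left : A ≤ _) ha₀mem.1, ha₀mem.2⟩)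
              (Submodule.mem_inf.mpr ⟨hyU, y.2⟩)
      exact ha₀ne (congrArg Subtype.val (hnd a key))
  · -- easy direction
    rintro ⟨hAle, hA2, hiso⟩ U hU3 hAU
    refine ⟨hU3, ?_⟩
    by_cases hUle : U ≤ V₀
    · exact Or.inl hUle
    · right
      have hAeq : A = U ⊓ V₀ :=
        Submodule.eq_of_le_of_finrank_eq (le_inf hAU hAle)
          (by rw [hA, hinf U hU3 hUle])
      rw [← hAeq]
      exact ⟨hAle, hA2, hiso⟩
end

section
/- Let dim V = n, k = 3, and let H be a hyperplane of the 3-Grassmannian defined by f ∈ (⋀³V)*. Let t ≤ (n−2)/2 be a non-negative integer and suppose the depth δ(H) < n−1−2t (i.e., for every 1-subspace p, the radical of the symplectic form f_p(x,y) = f(v∧x∧y) on V/p, where p = ⟨v⟩, has rank less than n−1−2t). Then for every subspace W of V of dimension n−t, the induced map f̃_W : ⋀²W → W*, f̃_W(x∧y)(w) = f(x∧y∧w), is surjective. -/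
open Module

section Aux

variable {K V : Type*} [Field K] [AddCommGroup V] [Module K V]

private lemma upd1 (a c x : V) (b : V) : Function.update ![a, b, c] 1 x = ![a, x, c] := by
  funext i; fin_cases i <;> simp [Function.update]

private lemma upd2 (a b x : V) (c : V) : Function.update ![a, b, c] 2 x = ![a, b, x] := by
  funext i; fin_cases i <;> simp [Function.update]

/-- The bilinear map `(x, y) ↦ φ ![w, x, y]`. -/
noncomputable def Baux (φ : AlternatingMap K V K (Fin 3)) (w : V) : V →ₗ[K] V →ₗ[K] K :=
  LinearMap.mk₂ K (fun x y => φ ![w, x, y])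
    (fun x₁ x₂ y => by
      show φ ![w, x₁ + x₂, y] = φ ![w, x₁, y] + φ ![w, x₂, y]
      rw [← upd1 w y (x₁ + x₂) 0, ← upd1 w y x₁ 0, ← upd1 w y x₂ 0, φ.map_update_add])
    (fun r x y => by
      show φ ![w, r • x, y] = r • φ ![w, x, y]
      rw [← upd1 w y (r • x) 0, ← upd1 w y x 0, φ.map_update_smul])
    (fun x y₁ y₂ => by
      show φ ![w, x, y₁ + y₂] = φ ![w, x, y₁] + φ ![w, x, y₂]
      rw [← upd2 w x (y₁ + y₂) 0, ← upd2 w x y₁ 0, ← upd2 w x y₂ 0, φ.map_update_add])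
    (fun r x y => by
      show φ ![w, x, r • y] = r • φ ![w, x, y]
      rw [← upd2 w x (r • y) 0, ← upd2 w x y 0, φ.map_update_smul])

@[simp] lemma Baux_apply (φ : AlternatingMap K V K (Fin 3)) (w x y : V) :
    Baux φ w x y = φ ![w, x, y] := rfl

lemma cyc (φ : AlternatingMap K V K (Fin 3)) (a b c : V) :
    φ ![b, c, a] = φ ![a, b, c] := by
  have h : ![b, c, a] = ![a, b, c] ∘ (finRotate 3) := by
    funext i; fin_cases i <;> rfl
  rw [h, φ.map_perm]
  have : Equiv.Perm.sign (finRotate 3) = 1 := by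
    rw [sign_finRotate]; norm_num
  rw [this, one_smul]

end Aux

/-- Let `H` be the hyperplane of the 3-Grassmannian defined by `f ∈ (⋀³V)*` (with associated
alternating form `φ`), `t ≤ (n-2)/2`, and suppose `δ(H) < n - 1 - 2t`, i.e. for every nonzero
`v` the radical `{x : ∀ y, φ(v,x,y) = 0}` (which contains `v`) has dimension `< n - 2t`.
Then for every subspace `W` of dimension `n - t`, the induced map
`f̃_W : ⋀²W → W*`, `f̃_W(x∧y)(w) = φ(x,y,w)`, is surjective. -/
theorem stmt_16 (K V : Type*) [Field K] [AddCommGroup V] [Module K V] [FiniteDimensional K V]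
    (n t : ℕ) (hn : finrank K V = n) (hn5 : 5 ≤ n) (ht : 2 * t ≤ n - 2)
    (f : Module.Dual K (⋀[K]^3 V)) (hf : f ≠ 0)
    (φ : AlternatingMap K V K (Fin 3))
    (hφ : ∀ v : Fin 3 → V, φ v = f (wedge K 3 v))
    (hdepth : ∀ v : V, v ≠ 0 → ∀ Rv : Submodule K V,
      (∀ x : V, x ∈ Rv ↔ ∀ y : V, φ ![v, x, y] = 0) → finrank K Rv < n - 2 * t)
    (W : Submodule K V) (hW : finrank K W = n - t)
    (FW : (⋀[K]^2 W) →ₗ[K] Module.Dual K W)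
    (hFW : ∀ x y w : W, FW (wedge K 2 ![x, y]) w = φ ![(x : V), (y : V), (w : V)]) :
    Function.Surjective FW := by
  by_contra hsurj
  -- the range of FW is a proper subspace of the dual of W
  have hrange : LinearMap.range FW ≠ ⊤ := by
    intro h
    exact hsurj (LinearMap.range_eq_top.mp h)
  -- find a nonzero w ∈ W killed by everything in the range
  haveI hfd : FiniteDimensional K (Module.Dual K W) := inferInstance
  haveI : FiniteDimensional K (LinearMap.range FW) :=
    FiniteDimensional.finiteDimensional_submodule (LinearMap.range FW)
  have hco : (LinearMap.range FW).dualCoannihilator ≠ ⊥ := by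
    intro h
    apply hrange
    have := Subspace.dualCoannihilator_dualAnnihilator_eq (W := LinearMap.range FW)
    rw [h, Submodule.dualAnnihilator_bot] at this
    exact this.symm
  obtain ⟨w, hwmem, hwne⟩ := Submodule.exists_mem_ne_zero_of_ne_bot hco
  have hwann : ∀ g ∈ LinearMap.range FW, g w = 0 :=
    (Submodule.mem_dualCoannihilator w).mp hwmem
  -- hence φ(x, y, w) = 0 for all x y ∈ W, so φ(↑w, x, y) = 0 for x, y ∈ W
  have hiso : ∀ x y : W, φ ![(w : V), (x : V), (y : V)] = 0 := by
    intro x y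
    have h1 : FW (wedge K 2 ![x, y]) w = 0 :=
      hwann _ (LinearMap.mem_range_self _ _)
    rw [hFW] at h1
    rw [← cyc φ (w : V) (x : V) (y : V)]
    exact h1
  have hw0 : (w : V) ≠ 0 := fun h => hwne (Subtype.ext h)
  -- the bilinear form B x y = φ(w, x, y)
  set B : V →ₗ[K] V →ₗ[K] K := Baux φ (w : V) with hB
  -- the radical
  set R : Submodule K V := LinearMap.ker B with hR
  have hRmem : ∀ x : V, x ∈ R ↔ ∀ y : V, φ ![(w : V), x, y] = 0 := by
    intro x
    rw [hR, LinearMap.mem_ker, LinearMap.ext_iff]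
    simp only [hB, Baux_apply, LinearMap.zero_apply]
  have hRlt : finrank K R < n - 2 * t := hdepth _ hw0 R hRmem
  -- the map g : W → V*, x ↦ B x
  set g : W →ₗ[K] Module.Dual K V := B.comp W.subtype with hg
  -- range g ⊆ dual annihilator of W
  have hrle : LinearMap.range g ≤ W.dualAnnihilator := by
    rintro - ⟨x, rfl⟩
    rw [Submodule.mem_dualAnnihilator]
    intro y hy
    exact hiso x ⟨y, hy⟩
  -- finrank of dualAnnihilator of W is t
  have hannW : finrank K W.dualAnnihilator = n - (n - t) := by
    have h1 : finrank K (V ⧸ W) = finrank K W.dualAnnihilator :=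
      (Subspace.quotEquivAnnihilator W).finrank_eq
    have h2 := Submodule.finrank_quotient_add_finrank W
    rw [hn, hW] at h2
    omega
  have hrg : finrank K (LinearMap.range g) ≤ n - (n - t) := by
    rw [← hannW]
    exact Submodule.finrank_mono hrle
  -- rank-nullity
  have hrn : finrank K (LinearMap.range g) + finrank K (LinearMap.ker g) = n - t := by
    rw [LinearMap.finrank_range_add_finrank_ker, hW]
  -- ker g maps into R
  have hker : (LinearMap.ker g).map W.subtype ≤ R := by
    rintro - ⟨x, hx, rfl⟩
    simp only [SetLike.mem_coe, LinearMap.mem_ker] at hx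
    exact hx
  have hkerR : finrank K (LinearMap.ker g) ≤ finrank K R := by
    rw [← Submodule.finrank_map_subtype_eq W (LinearMap.ker g)]
    exact Submodule.finrank_mono hker
  omega
end

section
/- Let dim V = n, f ∈ (⋀³V)* nonzero defining hyperplane H with kernel K(H) = ker(f̃) ⊆ ⋀²V, where f̃(ω)(x) = f(ω∧x). Let t ≤ (n−2)/2 and suppose δ(H) < n−1−2t. Then for any subspace W of V with dim W = n−t, letting K(H(W)) = ker of the analogous map ⋀²W → W*, one has dim( K(H(W)) / (K(H) ∩ K(H(W))) ) ≤ t. -/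
open Module

set_option synthInstance.maxHeartbeats 1000000
set_option maxHeartbeats 1000000

/-- The exterior power of a finite-dimensional space is finite-dimensional. -/
lemma exteriorPower_finiteDimensional (K V : Type*) [Field K] [AddCommGroup V] [Module K V]
    [FiniteDimensional K V] (k : ℕ) : FiniteDimensional K (⋀[K]^k V) := by
  have hfg : (LinearMap.range (ExteriorAlgebra.ι K (M := V))).FG := by
    have : Module.Finite K (LinearMap.range (ExteriorAlgebra.ι K (M := V))) :=
      Module.Finite.range _
    exact (Submodule.fg_top _).mp (Module.finite_def.mp this)
  have : (⋀[K]^k V).FG := Submodule.FG.pow hfg k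
  exact Module.Finite.iff_fg.mpr this

/-- The wedges span the exterior power. -/
lemma wedge_span (K V : Type*) [Field K] [AddCommGroup V] [Module K V] (k : ℕ) :
    Submodule.span K (Set.range (wedge K k (V := V))) = ⊤ := by
  apply Submodule.map_injective_of_injective (Submodule.injective_subtype (⋀[K]^k V))
  rw [Submodule.map_span, Submodule.map_top, Submodule.range_subtype]
  have himg : (⋀[K]^k V).subtype '' Set.range (wedge K k) =
      Set.range (ExteriorAlgebra.ιMulti K k (M := V)) := by
    ext x
    constructor
    · rintro ⟨y, ⟨v, rfl⟩, rfl⟩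
      exact ⟨v, rfl⟩
    · rintro ⟨v, rfl⟩
      exact ⟨wedge K k v, ⟨v, rfl⟩, rfl⟩
  rw [himg, ExteriorAlgebra.ιMulti_span_fixedDegree]


/-- Abstract rank-nullity estimate: if `g` maps `p` into `A`, then
`dim p ≤ dim (p ⊓ ker g) + dim A`. -/
lemma aux_finrank_le {K M N : Type*} [Field K] [AddCommGroup M] [Module K M]
    [AddCommGroup N] [Module K N] [FiniteDimensional K M]
    (g : M →ₗ[K] N) (p : Submodule K M) (A : Submodule K N) [FiniteDimensional K A]
    (hr : ∀ x ∈ p, g x ∈ A) :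
    finrank K p ≤ finrank K (p ⊓ LinearMap.ker g : Submodule K M) + finrank K A := by
  set L : p →ₗ[K] N := g.domRestrict p with hL
  have hrange : LinearMap.range L ≤ A := by
    rintro _ ⟨⟨x, hx⟩, rfl⟩
    exact hr x hx
  have hker : LinearMap.ker L = Submodule.comap p.subtype (p ⊓ LinearMap.ker g) := by
    ext ⟨x, hx⟩
    simp [hL, LinearMap.mem_ker, hx]
  have hkerrank : finrank K (LinearMap.ker L)
      = finrank K (p ⊓ LinearMap.ker g : Submodule K M) := by
    rw [hker, ← Submodule.finrank_map_subtype_eq p, Submodule.map_comap_subtype,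
      ← inf_assoc, inf_idem]
  have h1 := LinearMap.finrank_range_add_finrank_ker L
  have h2 : finrank K (LinearMap.range L) ≤ finrank K A := Submodule.finrank_mono hrange
  omega

/-- With `f ∈ (⋀³V)*` nonzero of associated form `φ`, `K(H) = ker f̃ ⊆ ⋀²V`, `t ≤ (n-2)/2`,
`δ(H) < n - 1 - 2t`, and `W ≤ V` of dimension `n - t` with restricted map `f̃_W : ⋀²W → W*`
of kernel `K(H(W))`, one has `dim( K(H(W)) / (K(H) ∩ K(H(W))) ) ≤ t`, where `⋀²W` is viewed
inside `⋀²V` via the canonical map `j`. -/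
theorem stmt_17 (K V : Type*) [Field K] [AddCommGroup V] [Module K V] [FiniteDimensional K V]
    (n t : ℕ) (hn : finrank K V = n) (hn5 : 5 ≤ n) (ht : 2 * t ≤ n - 2)
    (f : Module.Dual K (⋀[K]^3 V)) (hf : f ≠ 0)
    (φ : AlternatingMap K V K (Fin 3))
    (hφ : ∀ v : Fin 3 → V, φ v = f (wedge K 3 v))
    (hdepth : ∀ v : V, v ≠ 0 → ∀ Rv : Submodule K V,
      (∀ x : V, x ∈ Rv ↔ ∀ y : V, φ ![v, x, y] = 0) → finrank K Rv < n - 2 * t)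
    (F : (⋀[K]^2 V) →ₗ[K] Module.Dual K V)
    (hF : ∀ x y z : V, F (wedge K 2 ![x, y]) z = φ ![x, y, z])
    (W : Submodule K V) (hW : finrank K W = n - t)
    (FW : (⋀[K]^2 W) →ₗ[K] Module.Dual K W)
    (hFW : ∀ x y w : W, FW (wedge K 2 ![x, y]) w = φ ![(x : V), (y : V), (w : V)])
    (j : (⋀[K]^2 W) →ₗ[K] (⋀[K]^2 V))
    (hj : ∀ v : Fin 2 → W, j (wedge K 2 v) = wedge K 2 (fun i => (v i : V))) :
    finrank K (LinearMap.ker FW) ≤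
      finrank K (LinearMap.ker FW ⊓ Submodule.comap j (LinearMap.ker F) :
        Submodule K (⋀[K]^2 W)) + t := by
  have hfd : FiniteDimensional K (⋀[K]^2 W) := exteriorPower_finiteDimensional K W 2
  -- key compatibility: for ω ∈ ⋀²W and w ∈ W, F (j ω) w = FW ω w
  have key : ∀ (ω : ⋀[K]^2 W) (w : W), F (j ω) (w : V) = FW ω w := by
    intro ω w
    have hmem : ω ∈ Submodule.span K (Set.range (wedge K 2 (V := W))) := by
      rw [wedge_span]; trivial
    induction hmem using Submodule.span_induction with
    | mem x hx =>
      obtain ⟨v, rfl⟩ := hx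
      have hv : v = ![v 0, v 1] := by ext i; fin_cases i <;> rfl
      have h1 : (fun i => ((v i : V))) = ![(v 0 : V), (v 1 : V)] := by
        ext i; fin_cases i <;> rfl
      rw [hj, h1, hF]
      conv_rhs => rw [hv]
      rw [hFW]
    | zero => simp
    | add x y _ _ hx hy => simp [map_add, LinearMap.add_apply, hx, hy]
    | smul a x _ hx => simp [map_smul, LinearMap.smul_apply, hx]
  haveI : FiniteDimensional K W.dualAnnihilator := inferInstance
  have hann : finrank K W.dualAnnihilator = t := by
    have h1 := Submodule.finrank_quotient_add_finrank W
    have h2 : finrank K (V ⧸ W) = finrank K W.dualAnnihilator :=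
      LinearEquiv.finrank_eq (Subspace.quotEquivAnnihilator W)
    rw [hn, hW] at h1
    omega
  have hcomap : Submodule.comap j (LinearMap.ker F) = LinearMap.ker (F ∘ₗ j) := by
    rw [LinearMap.ker_comp]
  have hmain := aux_finrank_le (F ∘ₗ j) (LinearMap.ker FW) W.dualAnnihilator ?_
  · rw [hcomap]
    rw [hann] at hmain
    exact hmain
  · intro x hx
    rw [Submodule.mem_dualAnnihilator]
    intro w hw
    have := key x ⟨w, hw⟩
    rw [LinearMap.mem_ker.mp hx] at this
    simpa using this
end

section
/- Let q be a prime power and let r be a positive integer with r ≡ 1 (mod 3). Set M = ((q^{2r}−1)/(q−1))·(1 + q²·(q^{2r−2}−1)/(q²−1)), the number of lines of a non-degenerate symplectic polar space of rank r over F_q in a (2r)-dimensional space. Then (q²+q+1) does not divide M·(q^{2r+2}−1)/(q−1); in fact M·(q^{2r+2}−1)/(q−1) ≡ q+1 (mod q²+q+1). -/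
lemma geom_aux (q : ℕ) (hq : 2 ≤ q) (n : ℕ) :
    (q ^ n - 1) / (q - 1) = ∑ i ∈ Finset.range n, q ^ i := by
  obtain ⟨m, rfl⟩ : ∃ m, q = m + 2 := ⟨q - 2, by omega⟩
  have key : (m + 1) * (∑ i ∈ Finset.range n, (m + 2) ^ i) + 1 = (m + 2) ^ n := by
    induction n with
    | zero => simp
    | succ n ih =>
      rw [Finset.sum_range_succ, Nat.mul_add]
      have h2 : (m + 2) ^ (n + 1) = (m + 2) * (m + 2) ^ n := by ring
      rw [h2]
      nlinarith [ih]
  have key2 : ((m + 2) ^ n - 1) = (m + 1) * ∑ i ∈ Finset.range n, (m + 2) ^ i := by omega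
  have : m + 2 - 1 = m + 1 := by omega
  rw [key2, this, Nat.mul_div_cancel_left _ (by omega : 0 < m + 1)]

lemma sum3_aux {R : Type*} [CommRing R] (x : R) (h : 1 + x + x ^ 2 = 0) (m : ℕ) :
    ∑ i ∈ Finset.range (3 * m), x ^ i = 0 := by
  induction m with
  | zero => simp
  | succ m ih =>
    have : 3 * (m + 1) = (3 * m + 1) + 1 + 1 := by ring
    rw [this, Finset.sum_range_succ, Finset.sum_range_succ, Finset.sum_range_succ, ih]
    have hx : x ^ (3 * m + 1) = x ^ (3 * m) * x := by ring
    have hx2 : x ^ (3 * m + 1 + 1) = x ^ (3 * m) * x ^ 2 := by ring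
    rw [hx, hx2]
    linear_combination (x ^ (3 * m)) * h

/-- For a prime power `q` and `r ≡ 1 (mod 3)`, with
`M = ((q^{2r}-1)/(q-1))·(1 + q²·(q^{2r-2}-1)/(q²-1))` the number of lines of a non-degenerate
rank-`r` symplectic polar space over `F_q`, the number `q² + q + 1` does not divide
`M·(q^{2r+2}-1)/(q-1)`; indeed `M·(q^{2r+2}-1)/(q-1) ≡ q + 1 (mod q² + q + 1)`. -/
theorem stmt_18 (q r : ℕ) (hq : IsPrimePow q) (hr : 0 < r) (hr3 : r % 3 = 1) :
    ¬ (q ^ 2 + q + 1 ∣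
        ((q ^ (2 * r) - 1) / (q - 1) * (1 + q ^ 2 * ((q ^ (2 * r - 2) - 1) / (q ^ 2 - 1)))) *
          ((q ^ (2 * r + 2) - 1) / (q - 1))) ∧
    ((q ^ (2 * r) - 1) / (q - 1) * (1 + q ^ 2 * ((q ^ (2 * r - 2) - 1) / (q ^ 2 - 1)))) *
        ((q ^ (2 * r + 2) - 1) / (q - 1)) % (q ^ 2 + q + 1) = q + 1 := by
  have hq2 : 2 ≤ q := hq.two_le
  obtain ⟨k, rfl⟩ : ∃ k, r = 3 * k + 1 := ⟨r / 3, by omega⟩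
  have e1 : 2 * (3 * k + 1) = 6 * k + 2 := by ring
  have e2 : 2 * (3 * k + 1) - 2 = 6 * k := by omega
  have e3 : 2 * (3 * k + 1) + 2 = 6 * k + 4 := by omega
  rw [e2, e3, e1]
  have hq22 : 2 ≤ q ^ 2 := by nlinarith
  have hmid : q ^ (6 * k) = (q ^ 2) ^ (3 * k) := by rw [← pow_mul]; ring_nf
  rw [geom_aux q hq2, hmid, geom_aux (q ^ 2) hq22, geom_aux q hq2]
  set d := q ^ 2 + q + 1 with hd
  have hq2pos : 0 < q ^ 2 := by positivity
  have hdpos : q + 1 < d := by omega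
  haveI : NeZero d := ⟨by omega⟩
  set X := (∑ i ∈ Finset.range (6 * k + 2), q ^ i) *
      (1 + q ^ 2 * ∑ i ∈ Finset.range (3 * k), (q ^ 2) ^ i) *
      ∑ i ∈ Finset.range (6 * k + 4), q ^ i with hX
  set x : ZMod d := (q : ZMod d) with hx
  have h0 : 1 + x + x ^ 2 = 0 := by
    have : ((d : ℕ) : ZMod d) = 0 := ZMod.natCast_self d
    rw [hd] at this
    push_cast at this
    linear_combination this
  have h3 : x ^ 3 = 1 := by linear_combination (x - 1) * h0
  have hpow3 : ∀ m : ℕ, x ^ (3 * m) = 1 := by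
    intro m; rw [pow_mul, h3, one_pow]
  have hS1 : ∑ i ∈ Finset.range (6 * k + 2), x ^ i = 1 + x := by
    rw [Finset.sum_range_succ, Finset.sum_range_succ,
      show 6 * k = 3 * (2 * k) by ring, sum3_aux x h0]
    rw [show x ^ (3 * (2 * k) + 1) = x ^ (3 * (2 * k)) * x by ring, hpow3]
    ring
  have hS2 : ∑ i ∈ Finset.range (3 * k), (x ^ 2) ^ i = 0 := by
    apply sum3_aux
    linear_combination h0 + x * h3
  have hS3 : ∑ i ∈ Finset.range (6 * k + 4), x ^ i = 1 := by
    rw [show 6 * k + 4 = 3 * (2 * k + 1) + 1 by ring, Finset.sum_range_succ,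
      sum3_aux x h0, hpow3]
    ring
  have hcast : ((X : ℕ) : ZMod d) = ((q + 1 : ℕ) : ZMod d) := by
    rw [hX]
    push_cast
    rw [← hx] at *
    rw [hS1, hS2, hS3]
    ring
  have hmod : X % d = q + 1 := by
    have hv := ZMod.val_natCast (n := d) (a := X)
    rw [hcast, ZMod.val_natCast, Nat.mod_eq_of_lt hdpos] at hv
    omega
  refine ⟨?_, hmod⟩
  intro hdvd
  rw [Nat.dvd_iff_mod_eq_zero] at hdvd
  omega
end

section
/- Let V have even dimension n over the finite field F_q with n ≡ 4 (mod 6), and let H be a hyperplane of the 3-Grassmannian of V. Then R^↑(H) is not a line spread of PG(V): it is not the case that every 1-dimensional subspace of V lies on exactly one member of R^↑(H). (Proof by double counting point–plane flags: if R^↑(H) were a spread, then setting r = (n−2)/2 ≡ 1 (mod 3), the number (q²+q+1)|H| of flags would equal M·(q^n−1)/(q−1) with M the line count of a rank-r symplectic polar space, contradicting the divisibility obstruction modulo q²+q+1.) -/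
open Module

set_option linter.unusedSectionVars false

open Module Submodule Finset

namespace Stmt19

variable {K : Type*} [Field K] {V : Type*} [AddCommGroup V] [Module K V]

lemma upd0 (a b c x : V) : Function.update ![a,b,c] 0 x = ![x,b,c] := by
  funext i; fin_cases i <;> simp [Function.update]
lemma upd1 (a b c x : V) : Function.update ![a,b,c] 1 x = ![a,x,c] := by
  funext i; fin_cases i <;> simp [Function.update]
lemma upd2 (a b c x : V) : Function.update ![a,b,c] 2 x = ![a,b,x] := by
  funext i; fin_cases i <;> simp [Function.update]

variable (φ : V [⋀^Fin 3]→ₗ[K] K)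

def T : V →ₗ[K] V →ₗ[K] V →ₗ[K] K where
  toFun a :=
    { toFun := fun b =>
        { toFun := fun c => φ ![a, b, c]
          map_add' := fun c c' => by
            simpa [upd2] using φ.map_update_add ![a,b,c] 2 c c'
          map_smul' := fun r c => by
            simpa [upd2] using φ.map_update_smul ![a,b,c] 2 r c }
      map_add' := fun b b' => by
        ext c; simpa [upd1] using φ.map_update_add ![a,b,c] 1 b b'
      map_smul' := fun r b => by
        ext c; simpa [upd1] using φ.map_update_smul ![a,b,c] 1 r b }
  map_add' := fun a a' => by
    ext b c; simpa [upd0] using φ.map_update_add ![a,b,c] 0 a a'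
  map_smul' := fun r a => by
    ext b c; simpa [upd0] using φ.map_update_smul ![a,b,c] 0 r a

lemma T_apply (a b c : V) : T φ a b c = φ ![a, b, c] := rfl

lemma T011 (x y : V) : T φ x x y = 0 :=
  φ.map_eq_zero_of_eq (i := 0) (j := 1) _ (by simp) (by decide)
lemma T022 (x y : V) : T φ x y x = 0 :=
  φ.map_eq_zero_of_eq (i := 0) (j := 2) _ (by simp) (by decide)
lemma T122 (x y : V) : T φ y x x = 0 :=
  φ.map_eq_zero_of_eq (i := 1) (j := 2) _ (by simp) (by decide)

lemma Tswap01 (x y z : V) : T φ y x z = - T φ x y z := by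
  have h := T011 φ (x + y) z
  simp only [map_add, LinearMap.add_apply, T011] at h
  linear_combination h

lemma Tswap12 (x y z : V) : T φ z y x = - T φ z x y := by
  have h := T122 φ (x + y) z
  simp only [map_add, LinearMap.add_apply, T122] at h
  linear_combination h

lemma mem_span_triple' {x a b c : V} (h : x ∈ span K ({a, b, c} : Set V)) :
    ∃ α β γ : K, x = α • a + β • b + γ • c := by
  rw [show ({a,b,c} : Set V) = insert a {b,c} from rfl, Submodule.mem_span_insert] at h
  obtain ⟨α, z, hz, rfl⟩ := h
  obtain ⟨β, γ, rfl⟩ := Submodule.mem_span_pair.mp hz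
  exact ⟨α, β, γ, by rw [add_assoc]⟩

lemma span_vanish {a b c : V} (h : φ ![a, b, c] = 0) {x y z : V}
    (hx : x ∈ span K ({a, b, c} : Set V)) (hy : y ∈ span K ({a, b, c} : Set V))
    (hz : z ∈ span K ({a, b, c} : Set V)) : φ ![x, y, z] = 0 := by
  rw [← T_apply] at h ⊢
  have h2 : T φ b a c = 0 := by rw [Tswap01, h, neg_zero]
  have h3 : T φ a c b = 0 := by rw [Tswap12, h, neg_zero]
  have h5 : T φ b c a = 0 := by rw [Tswap12, h2, neg_zero]
  have h4 : T φ c b a = 0 := by rw [Tswap01, h5, neg_zero]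
  have h6 : T φ c a b = 0 := by rw [Tswap01, h3, neg_zero]
  obtain ⟨xa, xb, xc, rfl⟩ := mem_span_triple' hx
  obtain ⟨ya, yb, yc, rfl⟩ := mem_span_triple' hy
  obtain ⟨za, zb, zc, rfl⟩ := mem_span_triple' hz
  simp only [map_add, map_smul, LinearMap.add_apply, LinearMap.smul_apply, smul_eq_mul,
    T011, T022, T122, h, h2, h3, h4, h5, h6, mul_zero, add_zero, zero_add]


variable [FiniteDimensional K V]

lemma rank_pair_le (a b : V) : finrank K (span K ({a, b} : Set V)) ≤ 2 := by
  classical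
  refine le_trans (finrank_span_le_card _) ?_
  simp only [Set.toFinset_insert, Set.toFinset_singleton]
  exact le_trans (Finset.card_insert_le _ _) (by simp)

lemma rank_triple_le (a b c : V) : finrank K (span K ({a, b, c} : Set V)) ≤ 3 := by
  classical
  refine le_trans (finrank_span_le_card _) ?_
  simp only [Set.toFinset_insert, Set.toFinset_singleton]
  exact le_trans (Finset.card_insert_le _ _)
    (by exact Nat.succ_le_succ (le_trans (Finset.card_insert_le _ _) (by simp)))

lemma rank_pair {a b : V} (ha : a ≠ 0) (hb : b ∉ span K ({a} : Set V)) :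
    finrank K (span K ({a, b} : Set V)) = 2 := by
  have hlt : span K ({a} : Set V) < span K ({a, b} : Set V) := by
    refine lt_of_le_of_ne (span_mono (by simp)) fun hEq => hb ?_
    rw [hEq]; exact subset_span (by simp)
  have := Submodule.finrank_lt_finrank_of_lt hlt
  rw [finrank_span_singleton ha] at this
  exact le_antisymm (rank_pair_le a b) this

lemma rank_triple {a b c : V} (ha : a ≠ 0) (hb : b ∉ span K ({a} : Set V))
    (hc : c ∉ span K ({a, b} : Set V)) :
    finrank K (span K ({a, b, c} : Set V)) = 3 := by
  have hlt : span K ({a, b} : Set V) < span K ({a, b, c} : Set V) := by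
    refine lt_of_le_of_ne (span_mono (by intro x hx; simp at hx ⊢; tauto)) fun hEq => hc ?_
    rw [hEq]; exact subset_span (by simp)
  have := Submodule.finrank_lt_finrank_of_lt hlt
  rw [rank_pair ha hb] at this
  exact le_antisymm (rank_triple_le a b c) this

lemma eta3 (v : Fin 3 → V) : ![v 0, v 1, v 2] = v := by
  funext i; fin_cases i <;> rfl

/-- The main structural consequence of the spread hypothesis. -/
lemma rad_rank
    (h : ∀ p : Submodule K V, finrank K p = 1 →
        ∃! A : Submodule K V,
          (finrank K A = 2 ∧
            ∀ U : Submodule K V, finrank K U = 3 → A ≤ U →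
              ∀ v : Fin 3 → V, (∀ i, v i ∈ U) → φ v = 0) ∧ p ≤ A)
    {a : V} (ha : a ≠ 0) : finrank K (LinearMap.ker (T φ a)) = 2 := by
  obtain ⟨A, ⟨⟨hA2, hAP⟩, hpA⟩, huniq⟩ := h (span K {a}) (finrank_span_singleton ha)
  have haA : a ∈ A := hpA (mem_span_singleton_self a)
  -- A is contained in the radical
  have hAker : A ≤ LinearMap.ker (T φ a) := by
    intro x hx
    rw [LinearMap.mem_ker]
    ext v
    simp only [LinearMap.zero_apply]
    by_cases hxa : x ∈ span K ({a} : Set V)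
    · obtain ⟨c, rfl⟩ := mem_span_singleton.mp hxa
      simp [T011 φ]
    · have hspan : span K ({a, x} : Set V) ≤ A :=
        span_le.mpr (by rintro y (rfl | rfl) <;> assumption)
      have hr2 : finrank K (span K ({a, x} : Set V)) = 2 := rank_pair ha hxa
      have hAeq : span K ({a, x} : Set V) = A :=
        eq_of_le_of_finrank_le hspan (by rw [hA2, hr2])
      by_cases hU3 : finrank K (span K ({a, x, v} : Set V)) = 3
      · have hAU : A ≤ span K ({a, x, v} : Set V) := by
          rw [← hAeq]
          exact span_mono (by intro y hy; simp at hy ⊢; tauto)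
        have := hAP _ hU3 hAU ![a, x, v]
          (by intro i; fin_cases i <;> exact subset_span (by simp))
        exact this
      · -- the span has rank 2, so v lies in span {a, x}
        have hle : span K ({a, x} : Set V) ≤ span K ({a, x, v} : Set V) :=
          span_mono (by intro y hy; simp at hy ⊢; tauto)
        have hge := Submodule.finrank_mono hle
        rw [hr2] at hge
        have hle3 := rank_triple_le (K := K) a x v
        have hEq : span K ({a, x} : Set V) = span K ({a, x, v} : Set V) :=
          eq_of_le_of_finrank_le hle (by omega)
        have hv : v ∈ span K ({a, x} : Set V) := by
          rw [hEq]; exact subset_span (by simp)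
        obtain ⟨α, β, rfl⟩ := Submodule.mem_span_pair.mp hv
        simp [T022, T122]
  have h2le : 2 ≤ finrank K (LinearMap.ker (T φ a)) := by
    have := Submodule.finrank_mono hAker
    omega
  -- upper bound via uniqueness
  by_contra hne
  have h3 : 3 ≤ finrank K (LinearMap.ker (T φ a)) := by omega
  have hAlt : A < LinearMap.ker (T φ a) :=
    lt_of_le_of_ne hAker fun hEq => by rw [← hEq, hA2] at h3; omega
  obtain ⟨b, hbk, hbA⟩ := SetLike.exists_of_lt hAlt
  have hbspan : b ∉ span K ({a} : Set V) := fun hb => hbA (hpA hb)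
  have hA'2 : finrank K (span K ({a, b} : Set V)) = 2 := rank_pair ha hbspan
  have hTab : ∀ w : V, T φ a b w = 0 := fun w => by
    have := LinearMap.mem_ker.mp hbk
    rw [this]; rfl
  have hP : ∀ U : Submodule K V, finrank K U = 3 → span K ({a, b} : Set V) ≤ U →
      ∀ v : Fin 3 → V, (∀ i, v i ∈ U) → φ v = 0 := by
    intro U hU3 hle v hv
    have hlt : span K ({a, b} : Set V) < U :=
      lt_of_le_of_ne hle fun hEq => by rw [← hEq, hA'2] at hU3; omega
    obtain ⟨w, hwU, hw⟩ := SetLike.exists_of_lt hlt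
    have hsle : span K ({a, b, w} : Set V) ≤ U := by
      refine span_le.mpr ?_
      rintro y (rfl | rfl | rfl)
      · exact hle (subset_span (by simp))
      · exact hle (subset_span (by simp))
      · exact hwU
    have hr3 : finrank K (span K ({a, b, w} : Set V)) = 3 := rank_triple ha hbspan hw
    have hUeq : span K ({a, b, w} : Set V) = U :=
      eq_of_le_of_finrank_le hsle (by rw [hU3, hr3])
    have hv' : ∀ i, v i ∈ span K ({a, b, w} : Set V) := by rw [hUeq]; exact hv
    have := span_vanish φ (by rw [← T_apply]; exact hTab w) (hv' 0) (hv' 1) (hv' 2)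
    rwa [eta3] at this
  have hspan_le : span K ({a} : Set V) ≤ span K ({a, b} : Set V) := span_mono (by simp)
  have := huniq (span K ({a, b} : Set V)) ⟨⟨hA'2, hP⟩, hspan_le⟩
  exact hbA (this ▸ subset_span (by simp : b ∈ ({a, b} : Set V)))


section Counting
open scoped Classical
variable [Fintype K] [Fintype V]

lemma card_filter_mem (W : Submodule K V) :
    #(univ.filter (· ∈ W)) = Fintype.card K ^ finrank K W := by
  rw [← Fintype.card_subtype, ← Nat.card_eq_fintype_card, Nat.card_eq_fintype_card (α := W)]
  exact card_eq_pow_finrank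

lemma card_mem_not_mem {W U : Submodule K V} (hWU : W ≤ U) :
    #(univ.filter fun x => x ∈ U ∧ x ∉ W)
      = Fintype.card K ^ finrank K U - Fintype.card K ^ finrank K W := by
  have key : #(univ.filter fun x : V => x ∈ U ∧ x ∈ W) + #(univ.filter fun x : V => x ∈ U ∧ x ∉ W)
      = #(univ.filter (· ∈ U)) := by
    rw [← Finset.filter_filter, ← Finset.filter_filter,
      Finset.card_filter_add_card_filter_not]
  have h1 : (univ.filter fun x : V => x ∈ U ∧ x ∈ W) = univ.filter (· ∈ W) := by
    ext x; simp only [mem_filter, mem_univ, true_and]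
    exact ⟨fun h => h.2, fun h => ⟨hWU h, h⟩⟩
  rw [h1, card_filter_mem, card_filter_mem] at key
  have hle : Fintype.card K ^ finrank K W ≤ Fintype.card K ^ finrank K U :=
    Nat.pow_le_pow_right (by have := Fintype.one_lt_card (α := K); omega)
      (Submodule.finrank_mono hWU)
  omega

lemma pts_count [Fintype (Submodule K V)] (U : Submodule K V) :
    (Fintype.card K - 1) *
      #(univ.filter fun p : Submodule K V => finrank K p = 1 ∧ p ≤ U)
      = Fintype.card K ^ finrank K U - 1 := by
  set q := Fintype.card K
  set P := univ.filter fun p : Submodule K V => finrank K p = 1 ∧ p ≤ U with hP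
  set NZ := univ.filter fun x : V => x ∈ U ∧ x ∉ (⊥ : Submodule K V) with hNZ
  have hmap : ∀ x ∈ NZ, span K ({x} : Set V) ∈ P := by
    intro x hx
    simp only [hNZ, mem_filter, mem_univ, true_and, Submodule.mem_bot] at hx
    simp only [hP, mem_filter, mem_univ, true_and]
    exact ⟨finrank_span_singleton hx.2, span_le.mpr (by simp [hx.1])⟩
  have hfib := Finset.card_eq_sum_card_fiberwise hmap
  have hfibcard : ∀ p ∈ P, #(NZ.filter fun x => span K ({x} : Set V) = p) = q - 1 := by
    intro p hp
    simp only [hP, mem_filter, mem_univ, true_and] at hp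
    obtain ⟨hp1, hpU⟩ := hp
    have hEq : (NZ.filter fun x => span K ({x} : Set V) = p)
        = univ.filter fun x : V => x ∈ p ∧ x ∉ (⊥ : Submodule K V) := by
      ext x
      simp only [hNZ, Finset.filter_filter, mem_filter, mem_univ, true_and, Submodule.mem_bot]
      constructor
      · rintro ⟨⟨hxU, hx0⟩, rfl⟩; exact ⟨mem_span_singleton_self x, hx0⟩
      · rintro ⟨hxp, hx0⟩
        refine ⟨⟨hpU hxp, hx0⟩, ?_⟩
        refine eq_of_le_of_finrank_le (span_le.mpr (by simp [hxp])) ?_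
        rw [hp1, finrank_span_singleton hx0]
    rw [hEq, card_mem_not_mem bot_le, hp1, finrank_bot, pow_zero, pow_one]
  have hNZcard : #NZ = q ^ finrank K U - 1 := by
    have := card_mem_not_mem (bot_le : (⊥ : Submodule K V) ≤ U)
    rw [finrank_bot, pow_zero] at this
    exact this
  rw [Finset.sum_congr rfl hfibcard, Finset.sum_const, smul_eq_mul] at hfib
  rw [← hNZcard, hfib, mul_comm]

lemma double_count {α : Type*} [DecidableEq α] (P H : Finset α) (r : α → α → Prop) :
    ∑ U ∈ H, #(P.filter fun p => r p U) = ∑ p ∈ P, #(H.filter fun U => r p U) := by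
  have h1 : ∀ U ∈ H, (P ×ˢ H).filter (fun z => r z.1 z.2 ∧ z.2 = U)
      = (P.filter fun p => r p U) ×ˢ {U} := by
    intro U hU; ext z
    simp only [mem_filter, mem_product, mem_singleton]
    constructor
    · rintro ⟨⟨hp, _⟩, hr, h⟩; exact ⟨⟨hp, h ▸ hr⟩, h⟩
    · rintro ⟨⟨hp, hr⟩, h⟩; exact ⟨⟨hp, h ▸ hU⟩, h ▸ hr, h⟩
  have h2 : ∀ p ∈ P, (P ×ˢ H).filter (fun z => r z.1 z.2 ∧ z.1 = p)
      = {p} ×ˢ (H.filter fun U => r p U) := by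
    intro p hp; ext z
    simp only [mem_filter, mem_product, mem_singleton]
    constructor
    · rintro ⟨⟨_, hU⟩, hr, h⟩; exact ⟨h, hU, h ▸ hr⟩
    · rintro ⟨h, hU, hr⟩; exact ⟨⟨h ▸ hp, hU⟩, h ▸ hr, h⟩
  have c1 := Finset.card_eq_sum_card_fiberwise
    (f := Prod.snd) (s := (P ×ˢ H).filter fun z => r z.1 z.2) (t := H)
    (fun z hz => (Finset.mem_product.mp (Finset.mem_filter.mp hz).1).2)
  have c2 := Finset.card_eq_sum_card_fiberwise
    (f := Prod.fst) (s := (P ×ˢ H).filter fun z => r z.1 z.2) (t := P)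
    (fun z hz => (Finset.mem_product.mp (Finset.mem_filter.mp hz).1).1)
  calc ∑ U ∈ H, #(P.filter fun p => r p U)
      = ∑ U ∈ H, #((P ×ˢ H).filter fun z => r z.1 z.2 ∧ z.2 = U) := by
        refine Finset.sum_congr rfl fun U hU => ?_
        rw [h1 U hU, Finset.card_product, Finset.card_singleton, mul_one]
    _ = #((P ×ˢ H).filter fun z => r z.1 z.2) := by
        rw [c1]; exact Finset.sum_congr rfl fun U _ => by rw [Finset.filter_filter]
    _ = ∑ p ∈ P, #((P ×ˢ H).filter fun z => r z.1 z.2 ∧ z.1 = p) := by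
        rw [c2]; exact Finset.sum_congr rfl fun p _ => by rw [Finset.filter_filter]
    _ = ∑ p ∈ P, #(H.filter fun U => r p U) := by
        refine Finset.sum_congr rfl fun p hp => ?_
        rw [h2 p hp, Finset.card_product, Finset.card_singleton, one_mul]


lemma point_side [Fintype (Submodule K V)] [FiniteDimensional K V] {a : V} (ha : a ≠ 0)
    (hrad : finrank K (LinearMap.ker (T φ a)) = 2) :
    ((Fintype.card K ^ 3 - Fintype.card K) * (Fintype.card K ^ 3 - Fintype.card K ^ 2)) *
      #(univ.filter fun U : Submodule K V =>
        (finrank K U = 3 ∧ ∀ x ∈ U, ∀ y ∈ U, ∀ z ∈ U, T φ x y z = 0) ∧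
          span K ({a} : Set V) ≤ U)
    = (Fintype.card K ^ 2 - Fintype.card K) *
        (Fintype.card K ^ finrank K V - Fintype.card K ^ 2)
      + (Fintype.card K ^ finrank K V - Fintype.card K ^ 2) *
        (Fintype.card K ^ (finrank K V - 1) - Fintype.card K ^ 2) := by
  set q := Fintype.card K with hq
  set N := finrank K V with hN
  set Ra := LinearMap.ker (T φ a) with hRa
  have haRa : span K ({a} : Set V) ≤ Ra := by
    refine span_le.mpr ?_
    rintro y rfl
    simp only [SetLike.mem_coe, LinearMap.mem_ker]
    ext v
    simp [T011]
  set HsP := univ.filter (fun U : Submodule K V =>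
      (finrank K U = 3 ∧ ∀ x ∈ U, ∀ y ∈ U, ∀ z ∈ U, T φ x y z = 0) ∧
        span K ({a} : Set V) ≤ U) with hHsP
  set Pairs := univ.filter (fun bc : V × V => bc.1 ∉ span K ({a} : Set V) ∧
      bc.2 ∉ span K ({a, bc.1} : Set V) ∧ T φ a bc.1 bc.2 = 0) with hPairs
  have hmapg : ∀ bc ∈ Pairs, span K ({a, bc.1, bc.2} : Set V) ∈ HsP := by
    intro bc hbc
    obtain ⟨hb, hc, hT⟩ := (mem_filter.mp hbc).2
    simp only [hHsP, mem_filter, mem_univ, true_and]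
    refine ⟨⟨rank_triple ha hb hc, ?_⟩, span_mono (by simp)⟩
    intro x hx y hy z hz
    rw [T_apply]
    exact span_vanish φ (by rw [← T_apply]; exact hT) hx hy hz
  have hcard1 : #Pairs
      = ∑ U ∈ HsP, #(Pairs.filter fun bc => span K ({a, bc.1, bc.2} : Set V) = U) :=
    Finset.card_eq_sum_card_fiberwise hmapg
  have hfibU : ∀ U ∈ HsP, #(Pairs.filter fun bc => span K ({a, bc.1, bc.2} : Set V) = U)
      = (q ^ 3 - q) * (q ^ 3 - q ^ 2) := by
    intro U hU
    simp only [hHsP, mem_filter, mem_univ, true_and] at hU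
    obtain ⟨⟨hU3, hvan⟩, haU⟩ := hU
    have haU' : a ∈ U := haU (mem_span_singleton_self a)
    have hfibEq : (Pairs.filter fun bc => span K ({a, bc.1, bc.2} : Set V) = U)
        = univ.filter (fun bc : V × V => (bc.1 ∈ U ∧ bc.1 ∉ span K ({a} : Set V)) ∧
            (bc.2 ∈ U ∧ bc.2 ∉ span K ({a, bc.1} : Set V))) := by
      ext bc
      simp only [hPairs, Finset.filter_filter, mem_filter, mem_univ, true_and]
      constructor
      · rintro ⟨⟨hb, hc, hT⟩, rfl⟩
        exact ⟨⟨subset_span (by simp), hb⟩, subset_span (by simp), hc⟩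
      · rintro ⟨⟨hbU, hb⟩, hcU, hc⟩
        refine ⟨⟨hb, hc, hvan a haU' bc.1 hbU bc.2 hcU⟩, ?_⟩
        refine eq_of_le_of_finrank_le (span_le.mpr ?_) (by rw [hU3, rank_triple ha hb hc])
        rintro y (rfl | rfl | rfl) <;> assumption
    rw [hfibEq]
    set Bs := univ.filter (fun b : V => b ∈ U ∧ b ∉ span K ({a} : Set V)) with hBs
    have hm2 : ∀ bc ∈ univ.filter (fun bc : V × V =>
        (bc.1 ∈ U ∧ bc.1 ∉ span K ({a} : Set V)) ∧
          (bc.2 ∈ U ∧ bc.2 ∉ span K ({a, bc.1} : Set V))), bc.1 ∈ Bs := by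
      intro bc h
      simp only [mem_filter, mem_univ, true_and] at h
      simp only [hBs, mem_filter, mem_univ, true_and]
      exact h.1
    rw [Finset.card_eq_sum_card_fiberwise hm2]
    have hinner : ∀ b ∈ Bs, #((univ.filter (fun bc : V × V =>
        (bc.1 ∈ U ∧ bc.1 ∉ span K ({a} : Set V)) ∧
          (bc.2 ∈ U ∧ bc.2 ∉ span K ({a, bc.1} : Set V)))).filter fun bc => bc.1 = b)
        = q ^ 3 - q ^ 2 := by
      intro b hb
      simp only [hBs, mem_filter, mem_univ, true_and] at hb
      have hfib2 : ((univ.filter (fun bc : V × V =>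
          (bc.1 ∈ U ∧ bc.1 ∉ span K ({a} : Set V)) ∧
            (bc.2 ∈ U ∧ bc.2 ∉ span K ({a, bc.1} : Set V)))).filter fun bc => bc.1 = b)
          = {b} ×ˢ (univ.filter fun c : V => c ∈ U ∧ c ∉ span K ({a, b} : Set V)) := by
        ext ⟨b', c⟩
        simp only [Finset.filter_filter, mem_filter, mem_univ, true_and,
          Finset.mem_product, Finset.mem_singleton]
        constructor
        · rintro ⟨⟨h1, h2⟩, rfl⟩
          exact ⟨rfl, h2⟩
        · rintro ⟨rfl, h2⟩
          exact ⟨⟨hb, h2⟩, rfl⟩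
      rw [hfib2, Finset.card_product, Finset.card_singleton, one_mul]
      have hleU : span K ({a, b} : Set V) ≤ U :=
        span_le.mpr (by rintro y (rfl | rfl); exacts [haU', hb.1])
      rw [card_mem_not_mem hleU, hU3, rank_pair ha hb.2]
    rw [Finset.sum_congr rfl hinner, Finset.sum_const, smul_eq_mul]
    have hBscard : #Bs = q ^ 3 - q := by
      rw [hBs, card_mem_not_mem haU, hU3, finrank_span_singleton ha, pow_one]
    rw [hBscard]
  have hdirect : #Pairs = (q ^ 2 - q) * (q ^ N - q ^ 2)
      + (q ^ N - q ^ 2) * (q ^ (N - 1) - q ^ 2) := by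
    set Ball := univ.filter (fun b : V => b ∉ span K ({a} : Set V)) with hBall
    have hm3 : ∀ bc ∈ Pairs, bc.1 ∈ Ball := by
      intro bc h
      simp only [hPairs, mem_filter, mem_univ, true_and] at h
      simp only [hBall, mem_filter, mem_univ, true_and]
      exact h.1
    rw [Finset.card_eq_sum_card_fiberwise hm3]
    have hfib3 : ∀ b ∈ Ball, #(Pairs.filter fun bc => bc.1 = b)
        = #(univ.filter fun c : V => c ∉ span K ({a, b} : Set V) ∧ T φ a b c = 0) := by
      intro b hb
      simp only [hBall, mem_filter, mem_univ, true_and] at hb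
      have hfe : Pairs.filter (fun bc => bc.1 = b)
          = {b} ×ˢ (univ.filter fun c : V =>
              c ∉ span K ({a, b} : Set V) ∧ T φ a b c = 0) := by
        ext ⟨b', c⟩
        simp only [hPairs, Finset.filter_filter, mem_filter, mem_univ, true_and,
          Finset.mem_product, Finset.mem_singleton]
        constructor
        · rintro ⟨⟨h1, h2, h3⟩, rfl⟩
          exact ⟨rfl, h2, h3⟩
        · rintro ⟨rfl, h2, h3⟩
          exact ⟨⟨hb, h2, h3⟩, rfl⟩
      rw [hfe, Finset.card_product, Finset.card_singleton, one_mul]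
    rw [Finset.sum_congr rfl hfib3]
    rw [← Finset.sum_filter_add_sum_filter_not Ball (fun b => b ∈ Ra)]
    have hin1 : ∀ b ∈ Ball.filter (fun b => b ∈ Ra),
        #(univ.filter fun c : V => c ∉ span K ({a, b} : Set V) ∧ T φ a b c = 0)
          = q ^ N - q ^ 2 := by
      intro b hb
      simp only [hBall, Finset.filter_filter, mem_filter, mem_univ, true_and] at hb
      obtain ⟨hbs, hbR⟩ := hb
      have hT0 : ∀ c, T φ a b c = 0 := fun c => by
        have h0 := LinearMap.mem_ker.mp hbR
        rw [h0]; rfl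
      have hEq : (univ.filter fun c : V => c ∉ span K ({a, b} : Set V) ∧ T φ a b c = 0)
          = univ.filter fun c : V => c ∈ (⊤ : Submodule K V) ∧ c ∉ span K ({a, b} : Set V) := by
        ext c; simp [hT0]
      rw [hEq, card_mem_not_mem le_top, finrank_top, rank_pair ha hbs, ← hN]
    have hin2 : ∀ b ∈ Ball.filter (fun b => b ∉ Ra),
        #(univ.filter fun c : V => c ∉ span K ({a, b} : Set V) ∧ T φ a b c = 0)
          = q ^ (N - 1) - q ^ 2 := by
      intro b hb
      simp only [hBall, Finset.filter_filter, mem_filter, mem_univ, true_and] at hb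
      obtain ⟨hbs, hbR⟩ := hb
      have hTb : T φ a b ≠ 0 := fun h0 => hbR (LinearMap.mem_ker.mpr h0)
      have hker : finrank K (LinearMap.ker (T φ a b)) = N - 1 := by
        have h1 := LinearMap.finrank_range_add_finrank_ker (T φ a b)
        have h2 : finrank K (LinearMap.range (T φ a b)) = 1 := by
          have hr : LinearMap.range (T φ a b) ≠ ⊥ := by
            rwa [Ne, LinearMap.range_eq_bot]
          have hle1 : finrank K (LinearMap.range (T φ a b)) ≤ 1 := by
            have h3 := Submodule.finrank_mono (le_top : LinearMap.range (T φ a b) ≤ ⊤)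
            rw [finrank_top, finrank_self] at h3
            exact h3
          have hpos : finrank K (LinearMap.range (T φ a b)) ≠ 0 := fun h4 =>
            hr (Submodule.finrank_eq_zero.mp h4)
          omega
        rw [← hN] at h1
        omega
      have hsle : span K ({a, b} : Set V) ≤ LinearMap.ker (T φ a b) := by
        refine span_le.mpr ?_
        rintro y (rfl | rfl)
        · simp only [SetLike.mem_coe, LinearMap.mem_ker]; exact T022 φ y b
        · simp only [SetLike.mem_coe, LinearMap.mem_ker]; exact T122 φ y a
      have hEq : (univ.filter fun c : V => c ∉ span K ({a, b} : Set V) ∧ T φ a b c = 0)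
          = univ.filter fun c : V => c ∈ LinearMap.ker (T φ a b) ∧
              c ∉ span K ({a, b} : Set V) := by
        ext c
        simp only [mem_filter, mem_univ, true_and, LinearMap.mem_ker]
        tauto
      rw [hEq, card_mem_not_mem hsle, hker, rank_pair ha hbs]
    rw [Finset.sum_congr rfl hin1, Finset.sum_congr rfl hin2,
      Finset.sum_const, Finset.sum_const, smul_eq_mul, smul_eq_mul]
    have hc1 : #(Ball.filter (fun b => b ∈ Ra)) = q ^ 2 - q := by
      have hEq : Ball.filter (fun b => b ∈ Ra)
          = univ.filter fun b : V => b ∈ Ra ∧ b ∉ span K ({a} : Set V) := by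
        ext b
        simp only [hBall, Finset.filter_filter, mem_filter, mem_univ, true_and]
        tauto
      rw [hEq, card_mem_not_mem haRa, hrad, finrank_span_singleton ha, pow_one]
    have hc2 : #(Ball.filter (fun b => b ∉ Ra)) = q ^ N - q ^ 2 := by
      have hEq : Ball.filter (fun b => b ∉ Ra)
          = univ.filter fun b : V => b ∈ (⊤ : Submodule K V) ∧ b ∉ Ra := by
        ext b
        simp only [hBall, Finset.filter_filter, mem_filter, mem_univ, true_and,
          Submodule.mem_top]
        constructor
        · rintro ⟨h1, h2⟩; exact h2
        · intro h2; exact ⟨fun hs => h2 (haRa hs), h2⟩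
      rw [hEq, card_mem_not_mem le_top, finrank_top, hrad, ← hN]
    rw [hc1, hc2]
  rw [Finset.sum_congr rfl hfibU, Finset.sum_const, smul_eq_mul] at hcard1
  rw [mul_comm, ← hcard1, hdirect]

end Counting

lemma cube_id (qq : ℕ) (h : 1 ≤ qq) : (qq - 1) * (qq ^ 2 + qq + 1) = qq ^ 3 - 1 := by
  obtain ⟨s, rfl⟩ : ∃ s, qq = s + 1 := ⟨qq - 1, by omega⟩
  simp only [Nat.add_sub_cancel]
  have : (s + 1) ^ 3 = s * ((s + 1) ^ 2 + (s + 1) + 1) + 1 := by ring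
  omega

lemma numth (q n : ℕ) (hq : 2 ≤ q) (hn : n % 6 = 4)
    (hdvd : (q ^ 2 + q + 1) ∣ (q ^ n - 1) *
      ((q ^ 2 - q) * (q ^ n - q ^ 2) + (q ^ n - q ^ 2) * (q ^ (n - 1) - q ^ 2))) : False := by
  set t := q ^ 2 + q + 1 with ht
  have htpos : 7 ≤ t := by nlinarith
  haveI : NeZero t := ⟨by omega⟩
  have hq1 : 1 ≤ q := by omega
  obtain ⟨k, hk⟩ : ∃ k, n = 6 * k + 4 := ⟨n / 6, by omega⟩
  have he3 : q ^ 3 = (q - 1) * t + 1 := by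
    obtain ⟨s, rfl⟩ : ∃ s, q = s + 1 := ⟨q - 1, by omega⟩
    simp only [ht, Nat.add_sub_cancel]
    ring
  have hx3 : (q : ZMod t) ^ 3 = 1 := by
    calc (q : ZMod t) ^ 3 = ((q ^ 3 : ℕ) : ZMod t) := by push_cast; ring
      _ = (((q - 1) * t + 1 : ℕ) : ZMod t) := by rw [he3]
      _ = 1 := by
          rw [Nat.cast_add, Nat.cast_mul, ZMod.natCast_self, mul_zero, zero_add, Nat.cast_one]
  set x := (q : ZMod t) with hx
  have hxn : x ^ n = x := by
    have h1 : x ^ n = (x ^ 3) ^ (2 * k + 1) * x := by rw [hk]; ring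
    rw [h1, hx3, one_pow, one_mul]
  have hxn1 : x ^ (n - 1) = 1 := by
    have h1 : n - 1 = 3 * (2 * k + 1) := by omega
    rw [h1, pow_mul, hx3, one_pow]
  have hple : q ≤ q ^ 2 := by nlinarith
  have hp2n : q ^ 2 ≤ q ^ n := Nat.pow_le_pow_right hq1 (by omega)
  have hp2n1 : q ^ 2 ≤ q ^ (n - 1) := Nat.pow_le_pow_right hq1 (by omega)
  have hp1n : 1 ≤ q ^ n := Nat.one_le_pow _ _ (by omega)
  have h0 : ((x ^ n - 1) * ((x ^ 2 - x) * (x ^ n - x ^ 2)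
      + (x ^ n - x ^ 2) * (x ^ (n - 1) - x ^ 2)) : ZMod t) = 0 := by
    have hc := (ZMod.natCast_eq_zero_iff _ t).mpr hdvd
    rw [Nat.cast_mul, Nat.cast_add, Nat.cast_mul, Nat.cast_mul, Nat.cast_sub hp1n,
      Nat.cast_sub hp2n, Nat.cast_sub hp2n1, Nat.cast_sub hple] at hc
    push_cast at hc
    exact hc
  rw [hxn, hxn1] at h0
  have h0' : x * (x - 1) ^ 3 = 0 := by
    have hr : x * (x - 1) ^ 3
        = (x - 1) * ((x ^ 2 - x) * (x - x ^ 2) + (x - x ^ 2) * (1 - x ^ 2)) := by ring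
    rw [hr, h0]
  have hdvd2 : t ∣ q * (q - 1) ^ 3 := by
    rw [← ZMod.natCast_eq_zero_iff]
    push_cast [Nat.cast_sub hq1]
    exact h0'
  have hco : Nat.Coprime t q := by
    have h1 : t = 1 + q * (q + 1) := by rw [ht]; ring
    rw [h1]
    exact (Nat.coprime_add_mul_left_left 1 q (q + 1)).mpr (Nat.coprime_one_left q)
  have hdvd3 : t ∣ (q - 1) ^ 3 := by
    rw [mul_comm] at hdvd2
    exact hco.dvd_of_dvd_mul_right hdvd2
  obtain ⟨s, hsq⟩ : ∃ s, q = s + 1 := ⟨q - 1, by omega⟩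
  rw [(by omega : q - 1 = s)] at hdvd3
  have hs1 : 1 ≤ s := by omega
  by_cases h3 : 3 ∣ s
  · obtain ⟨m, rfl⟩ := h3
    have hm : 1 ≤ m := by omega
    have ht3 : t = 3 * (3 * m ^ 2 + 3 * m + 1) := by rw [ht, hsq]; ring
    obtain ⟨c, hc⟩ := hdvd3
    have hdu : (3 * m ^ 2 + 3 * m + 1) ∣ 9 * m ^ 3 := by
      refine ⟨c, ?_⟩
      have h27 : (3 * m) ^ 3 = 3 * (9 * m ^ 3) := by ring
      rw [h27, ht3] at hc
      have := Nat.eq_of_mul_eq_mul_left (by omega : 0 < 3)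
        (by rw [hc]; ring : 3 * (9 * m ^ 3) = 3 * ((3 * m ^ 2 + 3 * m + 1) * c))
      exact this
    have hco2 : Nat.Coprime (3 * m ^ 2 + 3 * m + 1) (9 * m ^ 3) := by
      have c3 : Nat.Coprime (3 * m ^ 2 + 3 * m + 1) 3 := by
        have h1 : 3 * m ^ 2 + 3 * m + 1 = 1 + 3 * (m ^ 2 + m) := by ring
        rw [h1]
        exact (Nat.coprime_add_mul_left_left 1 3 (m ^ 2 + m)).mpr (Nat.coprime_one_left 3)
      have cm : Nat.Coprime (3 * m ^ 2 + 3 * m + 1) m := by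
        have h1 : 3 * m ^ 2 + 3 * m + 1 = 1 + m * (3 * m + 3) := by ring
        rw [h1]
        exact (Nat.coprime_add_mul_left_left 1 m (3 * m + 3)).mpr (Nat.coprime_one_left m)
      have h9 : (9 : ℕ) = 3 ^ 2 := by norm_num
      rw [h9]
      exact Nat.Coprime.mul_right (c3.pow_right 2) (cm.pow_right 3)
    have := hco2.eq_one_of_dvd hdu
    nlinarith
  · have hg : Nat.gcd t s ∣ 3 := by
      have h1 : Nat.gcd t s ∣ t := Nat.gcd_dvd_left t s
      have h2 : Nat.gcd t s ∣ s := Nat.gcd_dvd_right t s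
      have h3' : Nat.gcd t s ∣ s * (s + 3) := h2.mul_right (s + 3)
      have h4 : t - s * (s + 3) = 3 := by
        have h5 : t = s * (s + 3) + 3 := by rw [ht, hsq]; ring
        omega
      have := Nat.dvd_sub h1 h3'
      rwa [h4] at this
    have hco' : Nat.Coprime t s := by
      rcases (Nat.dvd_prime Nat.prime_three).mp hg with h | h
      · exact h
      · exact absurd (h ▸ Nat.gcd_dvd_right t s) h3
    have := (hco'.pow_right 3).eq_one_of_dvd hdvd3
    omega

end Stmt19


open Stmt19

/-- Over a finite field, if `dim V = n` is even with `n ≡ 4 (mod 6)` and `H` is the hyperplane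
of the 3-Grassmannian defined by a nontrivial alternating 3-linear form `φ`, then the upper
radical `R^↑(H)` is not a line spread of `PG(V)`: it is not the case that every 1-dimensional
subspace lies on exactly one member of `R^↑(H)`. -/
theorem stmt_19 (K : Type*) [Field K] [Fintype K]
    (V : Type*) [AddCommGroup V] [Module K V] [FiniteDimensional K V]
    (n : ℕ) (hn : finrank K V = n) (heven : Even n) (hmod : n % 6 = 4)
    (φ : AlternatingMap K V K (Fin 3)) (hφ : φ ≠ 0) :
    ¬ ∀ p : Submodule K V, finrank K p = 1 →
        ∃! A : Submodule K V,
          (finrank K A = 2 ∧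
            ∀ U : Submodule K V, finrank K U = 3 → A ≤ U →
              ∀ v : Fin 3 → V, (∀ i, v i ∈ U) → φ v = 0) ∧ p ≤ A := by
  intro h
  classical
  haveI : Finite V := Module.finite_of_finite K
  letI : Fintype V := Fintype.ofFinite V
  haveI : Finite (Submodule K V) :=
    Finite.of_injective (fun W : Submodule K V => (W : Set V)) SetLike.coe_injective
  letI : Fintype (Submodule K V) := Fintype.ofFinite _
  subst hn
  open Finset Submodule in
  set q := Fintype.card K with hq
  have hq2 : 2 ≤ q := Fintype.one_lt_card
  set N := finrank K V with hN
  have hN4 : 4 ≤ N := by omega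
  set P0 := (q ^ 2 - q) * (q ^ N - q ^ 2)
      + (q ^ N - q ^ 2) * (q ^ (N - 1) - q ^ 2) with hP0
  set C := (q ^ 3 - q) * (q ^ 3 - q ^ 2) with hC
  set Pts := Finset.univ.filter (fun p : Submodule K V => finrank K p = 1) with hPts
  set Hs := Finset.univ.filter (fun U : Submodule K V =>
      finrank K U = 3 ∧ ∀ x ∈ U, ∀ y ∈ U, ∀ z ∈ U, T φ x y z = 0) with hHs
  have E1 : ∀ U ∈ Hs, #(Pts.filter fun p => p ≤ U) = q ^ 2 + q + 1 := by
    intro U hU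
    have hU3 : finrank K U = 3 := ((Finset.mem_filter.mp hU).2).1
    have hpc := pts_count (K := K) (V := V) U
    rw [hU3, ← hq] at hpc
    have hff : Pts.filter (fun p => p ≤ U)
        = Finset.univ.filter fun p : Submodule K V => finrank K p = 1 ∧ p ≤ U := by
      rw [hPts, Finset.filter_filter]
    rw [← hff] at hpc
    have hid : (q - 1) * (q ^ 2 + q + 1) = q ^ 3 - 1 := cube_id q (by omega)
    exact Nat.eq_of_mul_eq_mul_left (by omega : 0 < q - 1) (hpc.trans hid.symm)
  have Edc := double_count Pts Hs (fun p U => p ≤ U)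
  have Eleft : ∑ U ∈ Hs, #(Pts.filter fun p => p ≤ U) = #Hs * (q ^ 2 + q + 1) := by
    rw [Finset.sum_congr rfl E1, Finset.sum_const, smul_eq_mul]
  have E3 : ∀ p ∈ Pts, C * #(Hs.filter fun U => p ≤ U) = P0 := by
    intro p hp
    have hp1 : finrank K p = 1 := (Finset.mem_filter.mp hp).2
    have hpbot : p ≠ ⊥ := fun hEq => by rw [hEq, finrank_bot] at hp1; omega
    obtain ⟨a, haP, ha0⟩ := Submodule.exists_mem_ne_zero_of_ne_bot hpbot
    have hpa : p = span K ({a} : Set V) := by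
      refine (eq_of_le_of_finrank_le (span_le.mpr (by simp [haP])) ?_).symm
      rw [hp1, finrank_span_singleton ha0]
    have hrad := rad_rank φ h ha0
    have hps := point_side φ ha0 hrad
    rw [← hq, ← hN] at hps
    have hff : Hs.filter (fun U => p ≤ U)
        = Finset.univ.filter fun U : Submodule K V =>
            (finrank K U = 3 ∧ ∀ x ∈ U, ∀ y ∈ U, ∀ z ∈ U, T φ x y z = 0) ∧
              span K ({a} : Set V) ≤ U := by
      rw [hHs, Finset.filter_filter, hpa]
    rw [hC, hP0, hff]
    exact hps
  have Eright : C * ∑ p ∈ Pts, #(Hs.filter fun U => p ≤ U) = #Pts * P0 := by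
    rw [Finset.mul_sum, Finset.sum_congr rfl E3, Finset.sum_const, smul_eq_mul]
  have E4 : (q - 1) * #Pts = q ^ N - 1 := by
    have hpc := pts_count (K := K) (V := V) ⊤
    rw [finrank_top, ← hq, ← hN] at hpc
    have hPts' : (Finset.univ.filter fun p : Submodule K V => finrank K p = 1 ∧ p ≤ ⊤)
        = Pts := by
      rw [hPts]
      apply Finset.filter_congr
      intro p _
      simp
    rwa [hPts'] at hpc
  have hkey : C * (#Hs * (q ^ 2 + q + 1)) = #Pts * P0 := by
    rw [← Eleft, Edc]
    exact Eright
  have hdvd : (q ^ 2 + q + 1) ∣ (q ^ N - 1) * P0 := by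
    refine ⟨(q - 1) * (C * #Hs), ?_⟩
    calc (q ^ N - 1) * P0 = (q - 1) * #Pts * P0 := by rw [E4]
      _ = (q - 1) * (#Pts * P0) := by ring
      _ = (q - 1) * (C * (#Hs * (q ^ 2 + q + 1))) := by rw [hkey]
      _ = (q ^ 2 + q + 1) * ((q - 1) * (C * #Hs)) := by ring
  exact numth q N hq2 hmod (hP0 ▸ hdvd)
end
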